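/- arXiv:1304.6440 — 4 statements merged into one kernel-verified Lean document; each statement's English description precedes it below -/
import Mathlib

section
/- Let R : ℝ → ℝ be locally integrable with R(t) = O(|t|^s) for some s > 0 as |t| → ∞, and let ψ be a Schwartz function. If there exist constants C, x₀ > 0 and α > 0 such that |∫_{-∞}^{∞} R(t) ψ(x - t) dt| ≥ C x^α for all x > x₀, then there exist constants C', X₀ > 0 such that (1/X) ∫_X^{2X} |R(t)| dt ≥ C' X^α for all X > X₀. -/
open MeasureTheory Real Filter

open scoped Convolution

set_option maxHeartbeats 1000000 in
/-- Sarnak's calculus lemma: a pointwise lower bound on the smoothed remainder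
implies an averaged lower bound. -/
theorem sarnak_calculus_lemma
    (R : ℝ → ℝ) (hR : LocallyIntegrable R volume)
    (s : ℝ) (hs : 0 < s)
    (hgrowth : ∃ C : ℝ, 0 < C ∧ ∀ t : ℝ, |R t| ≤ C * (1 + |t|) ^ s)
    (ψ : SchwartzMap ℝ ℝ)
    (α C x₀ : ℝ) (hα : 0 < α) (hC : 0 < C) (hx₀ : 0 < x₀)
    (hlow : ∀ x : ℝ, x₀ < x → C * x ^ α ≤ |∫ t : ℝ, R t * ψ (x - t)|) :
    ∃ C' X₀ : ℝ, 0 < C' ∧ 0 < X₀ ∧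
      ∀ X : ℝ, X₀ < X → C' * X ^ α ≤ (1 / X) * ∫ t in X..(2 * X), |R t| := by
  classical
  obtain ⟨A, hA, hRA⟩ := hgrowth
  -- choose a large decay exponent
  set k : ℕ := ⌈2 * s⌉₊ + 3 with hk_def
  have hk : 2 * s + 3 ≤ (k : ℝ) := by
    have h1 : 2 * s ≤ (⌈2 * s⌉₊ : ℝ) := Nat.le_ceil _
    rw [hk_def]; push_cast; linarith
  have hks : s + 2 ≤ (k : ℝ) := by linarith
  -- Schwartz decay bound
  obtain ⟨B, hB, hψB⟩ : ∃ B : ℝ, 0 < B ∧ ∀ u : ℝ, |ψ u| ≤ B * (1 + |u|) ^ (-(k : ℝ)) := by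
    refine ⟨2 ^ k *
      (Finset.Iic ((k : ℕ), (0 : ℕ))).sup (fun m => SchwartzMap.seminorm ℝ m.1 m.2) ψ + 1,
      by positivity, fun u => ?_⟩
    have h := SchwartzMap.one_add_le_sup_seminorm_apply (𝕜 := ℝ) (m := ((k : ℕ), 0))
      le_rfl le_rfl ψ u
    rw [norm_iteratedFDeriv_zero] at h
    have hpos : (0 : ℝ) < 1 + |u| := by positivity
    have hpow : (0 : ℝ) < (1 + |u|) ^ (k : ℕ) := by positivity
    rw [Real.norm_eq_abs, Real.norm_eq_abs] at h
    have h2 : |ψ u| ≤ (2 ^ k *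
        (Finset.Iic ((k : ℕ), (0 : ℕ))).sup (fun m => SchwartzMap.seminorm ℝ m.1 m.2) ψ + 1)
        / (1 + |u|) ^ (k : ℕ) := by
      rw [le_div_iff₀ hpow]
      nlinarith [h]
    calc |ψ u| ≤ _ / (1 + |u|) ^ (k : ℕ) := h2
      _ = _ * (1 + |u|) ^ (-(k : ℝ)) := by
          rw [Real.rpow_neg hpos.le, ← Real.rpow_natCast (1 + |u|) k, div_eq_mul_inv]
  -- pointwise Peetre-type bound
  have key : ∀ x t : ℝ, |R t * ψ (x - t)| ≤
      A * B * (1 + |x|) ^ s * (1 + |x - t|) ^ (s - (k : ℝ)) := by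
    intro x t
    have h1 : (0 : ℝ) < 1 + |t| := by positivity
    have h2 : (0 : ℝ) < 1 + |x| := by positivity
    have h3 : (0 : ℝ) < 1 + |x - t| := by positivity
    have hpeetre : 1 + |t| ≤ (1 + |x|) * (1 + |x - t|) := by
      have h4 : |t| ≤ |x| + |x - t| := by
        calc |t| = |x - (x - t)| := by ring_nf
          _ ≤ |x| + |x - t| := abs_sub _ _
      nlinarith [abs_nonneg x, abs_nonneg (x - t)]
    calc |R t * ψ (x - t)| = |R t| * |ψ (x - t)| := abs_mul _ _
      _ ≤ (A * (1 + |t|) ^ s) * (B * (1 + |x - t|) ^ (-(k : ℝ))) :=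
          mul_le_mul (hRA t) (hψB _) (abs_nonneg _) (by positivity)
      _ ≤ (A * ((1 + |x|) * (1 + |x - t|)) ^ s) * (B * (1 + |x - t|) ^ (-(k : ℝ))) := by
          have h5 := Real.rpow_le_rpow h1.le hpeetre hs.le
          have hB' : (0 : ℝ) ≤ B * (1 + |x - t|) ^ (-(k : ℝ)) := by positivity
          exact mul_le_mul_of_nonneg_right (mul_le_mul_of_nonneg_left h5 hA.le) hB'
      _ = A * B * (1 + |x|) ^ s * ((1 + |x - t|) ^ s * (1 + |x - t|) ^ (-(k : ℝ))) := by
          rw [Real.mul_rpow h2.le h3.le]; ring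
      _ = A * B * (1 + |x|) ^ s * (1 + |x - t|) ^ (s - (k : ℝ)) := by
          rw [← Real.rpow_add h3, ← sub_eq_add_neg]
  -- integrable kernel
  have hJint : Integrable (fun u : ℝ => (1 + |u|) ^ (-(2 : ℝ))) := by
    have : ((Module.finrank ℝ ℝ : ℝ)) < 2 := by
      rw [Module.finrank_self]; norm_num
    simpa only [Real.norm_eq_abs] using integrable_one_add_norm (E := ℝ) (μ := volume) this
  set J : ℝ := ∫ u : ℝ, (1 + |u|) ^ (-(2 : ℝ)) with hJ_def
  have hJ0 : 0 ≤ J := integral_nonneg fun u => by positivity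
  have hexp2 : ∀ x t : ℝ, (1 + |x - t|) ^ (s - (k : ℝ)) ≤ (1 + |x - t|) ^ (-(2 : ℝ)) :=
    fun x t => Real.rpow_le_rpow_of_exponent_le
      (by nlinarith [abs_nonneg (x - t)]) (by linarith)
  -- integrability of the smoothed integrand
  have hInt : ∀ x : ℝ, Integrable (fun t : ℝ => R t * ψ (x - t)) := by
    intro x
    refine Integrable.mono' (((hJint.comp_sub_left x)).const_mul (A * B * (1 + |x|) ^ s))
      (hR.aestronglyMeasurable.mul
        ((ψ.continuous.comp (continuous_const.sub continuous_id)).aestronglyMeasurable))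
      (ae_of_all _ fun t => ?_)
    rw [Real.norm_eq_abs]
    refine (key x t).trans ?_
    have := hexp2 x t
    have hc : (0 : ℝ) ≤ A * B * (1 + |x|) ^ s := by positivity
    exact mul_le_mul_of_nonneg_left this hc
  -- L¹ mass of ψ
  have hψint : Integrable (fun u : ℝ => |ψ u|) := ψ.integrable.abs
  set M : ℝ := (∫ u : ℝ, |ψ u|) + 1 with hM_def
  have hM : 0 < M := by
    have : 0 ≤ ∫ u : ℝ, |ψ u| := integral_nonneg fun u => abs_nonneg _
    rw [hM_def]; linarith
  set D : ℝ := A * B * 3 ^ s * (((4 : ℝ) ^ (s + 2 - (k : ℝ)))⁻¹ * J) with hD_def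
  have hD0 : 0 ≤ D := by
    have h4 : (0 : ℝ) < (4 : ℝ) ^ (s + 2 - (k : ℝ)) := Real.rpow_pos_of_pos (by norm_num) _
    rw [hD_def]; positivity
  refine ⟨C / (4 * M), max (max 1 x₀) (2 * D / C), by positivity, ?_, ?_⟩
  · exact lt_of_lt_of_le one_pos (le_max_of_le_left (le_max_left _ _))
  intro X hX
  have hX1 : (1 : ℝ) < X := lt_of_le_of_lt (le_max_of_le_left (le_max_left _ _)) hX
  have hXx₀ : x₀ < X := lt_of_le_of_lt (le_max_of_le_left (le_max_right _ _)) hX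
  have hXD : 2 * D / C < X := lt_of_le_of_lt (le_max_right _ _) hX
  have hX0 : (0 : ℝ) < X := by linarith
  -- the indicator function and convolution
  set f : ℝ → ℝ := (Set.Ioc X (2 * X)).indicator (fun t => |R t|) with hf_def
  have hfint : Integrable f := by
    rw [hf_def, integrable_indicator_iff measurableSet_Ioc]
    exact ((hR.integrableOn_isCompact isCompact_Icc).mono_set Set.Ioc_subset_Icc_self).abs
  set g : ℝ → ℝ := fun u => |ψ u| with hg_def
  set conv : ℝ → ℝ := f ⋆[ContinuousLinearMap.mul ℝ ℝ] g with hconv_def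
  have hconv_eq : ∀ x : ℝ, conv x = ∫ t in Set.Ioc X (2 * X), |R t| * |ψ (x - t)| := by
    intro x
    rw [hconv_def, convolution_def, ← integral_indicator measurableSet_Ioc]
    congr 1 with t
    by_cases ht : t ∈ Set.Ioc X (2 * X)
    · simp [hf_def, hg_def, ht, ContinuousLinearMap.mul_apply']
    · simp [hf_def, hg_def, ht, ContinuousLinearMap.mul_apply']
  have hconv_int : Integrable conv :=
    hfint.integrable_convolution (ContinuousLinearMap.mul ℝ ℝ) hψint
  have hconv_nonneg : ∀ x : ℝ, 0 ≤ conv x := by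
    intro x
    rw [hconv_eq x]
    exact setIntegral_nonneg measurableSet_Ioc fun t _ => by positivity
  have hconv_total : ∫ x : ℝ, conv x = (∫ t in Set.Ioc X (2 * X), |R t|) * ∫ u : ℝ, |ψ u| := by
    rw [hconv_def, integral_convolution (ContinuousLinearMap.mul ℝ ℝ) hfint hψint,
      hf_def, integral_indicator measurableSet_Ioc]
    simp [hg_def, ContinuousLinearMap.mul_apply']
  -- tail estimate
  have htail : ∀ x ∈ Set.Icc (5 / 4 * X) (7 / 4 * X),
      ∫ t in (Set.Ioc X (2 * X))ᶜ, |R t * ψ (x - t)| ≤ D / X := by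
    intro x hx
    obtain ⟨hx1, hx2⟩ := hx
    have hxpos : 0 < x := by linarith
    have hfar : ∀ t, t ∉ Set.Ioc X (2 * X) → X / 4 ≤ |x - t| := by
      intro t ht
      rw [Set.mem_Ioc, not_and_or, not_lt] at ht
      rcases ht with ht | ht
      · have : X / 4 ≤ x - t := by linarith
        exact this.trans (le_abs_self _)
      · push_neg at ht
        have : X / 4 ≤ t - x := by linarith
        calc X / 4 ≤ t - x := this
          _ ≤ |t - x| := le_abs_self _
          _ = |x - t| := abs_sub_comm _ _
    set cx : ℝ := A * B * (1 + |x|) ^ s with hcx_def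
    have hcx0 : 0 ≤ cx := by positivity
    set c2 : ℝ := cx * (X / 4) ^ (s + 2 - (k : ℝ)) with hc2_def
    have hc20 : 0 ≤ c2 := by
      have : (0 : ℝ) ≤ (X / 4) ^ (s + 2 - (k : ℝ)) := Real.rpow_nonneg (by linarith) _
      rw [hc2_def]; positivity
    set G : ℝ → ℝ := fun t => c2 * (1 + |x - t|) ^ (-(2 : ℝ)) with hG_def
    have hGint : Integrable G := (hJint.comp_sub_left x).const_mul c2
    have hGpt : ∀ t, t ∉ Set.Ioc X (2 * X) → |R t * ψ (x - t)| ≤ G t := by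
      intro t ht
      have h3 : (0 : ℝ) < 1 + |x - t| := by positivity
      have hX4 : (0 : ℝ) < X / 4 := by linarith
      have hsplit : (1 + |x - t|) ^ (s - (k : ℝ)) =
          (1 + |x - t|) ^ (s + 2 - (k : ℝ)) * (1 + |x - t|) ^ (-(2 : ℝ)) := by
        rw [← Real.rpow_add h3]; ring_nf
      have hstep : (1 + |x - t|) ^ (s + 2 - (k : ℝ)) ≤ (X / 4) ^ (s + 2 - (k : ℝ)) :=
        Real.rpow_le_rpow_of_nonpos hX4
          (le_trans (hfar t ht) (by linarith [abs_nonneg (x - t)])) (by linarith)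
      calc |R t * ψ (x - t)| ≤ cx * (1 + |x - t|) ^ (s - (k : ℝ)) := key x t
        _ = cx * ((1 + |x - t|) ^ (s + 2 - (k : ℝ)) * (1 + |x - t|) ^ (-(2 : ℝ))) := by
            rw [hsplit]
        _ ≤ cx * ((X / 4) ^ (s + 2 - (k : ℝ)) * (1 + |x - t|) ^ (-(2 : ℝ))) := by
            have hpos2 : (0 : ℝ) ≤ (1 + |x - t|) ^ (-(2 : ℝ)) := Real.rpow_nonneg h3.le _
            exact mul_le_mul_of_nonneg_left
              (mul_le_mul_of_nonneg_right hstep hpos2) hcx0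
        _ = G t := by rw [hG_def, hc2_def]; ring
    have hGtotal : ∫ t : ℝ, G t = c2 * J := by
      rw [hG_def]
      rw [integral_const_mul]
      congr 1
      exact integral_sub_left_eq_self (fun u : ℝ => (1 + |u|) ^ (-(2 : ℝ))) volume x
    have h1 : ∫ t in (Set.Ioc X (2 * X))ᶜ, |R t * ψ (x - t)| ≤
        ∫ t in (Set.Ioc X (2 * X))ᶜ, G t := by
      refine setIntegral_mono_on ((hInt x).abs.integrableOn) hGint.integrableOn
        measurableSet_Ioc.compl fun t ht => hGpt t ht
    have h2 : ∫ t in (Set.Ioc X (2 * X))ᶜ, G t ≤ ∫ t : ℝ, G t :=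
      setIntegral_le_integral hGint (ae_of_all _ fun t => by
        have h3 : (0 : ℝ) < 1 + |x - t| := by positivity
        exact mul_nonneg hc20 (Real.rpow_nonneg h3.le _))
    have h3 : c2 * J ≤ D / X := by
      have habsx : |x| = x := abs_of_pos hxpos
      have hbx : 1 + |x| ≤ 3 * X := by rw [habsx]; linarith
      have hcx_le : cx ≤ A * B * 3 ^ s * X ^ s := by
        rw [hcx_def]
        have h5 : (1 + |x|) ^ s ≤ (3 * X) ^ s :=
          Real.rpow_le_rpow (by positivity) hbx hs.le
        rw [Real.mul_rpow (by norm_num) hX0.le] at h5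
        have : (0 : ℝ) ≤ A * B := by positivity
        nlinarith [Real.rpow_nonneg (show (0:ℝ) ≤ 1 + |x| by positivity) s]
      have hX4 : (X / 4) ^ (s + 2 - (k : ℝ)) =
          X ^ (s + 2 - (k : ℝ)) * ((4 : ℝ) ^ (s + 2 - (k : ℝ)))⁻¹ := by
        rw [Real.div_rpow hX0.le (by norm_num), div_eq_mul_inv]
      have hXe : X ^ s * X ^ (s + 2 - (k : ℝ)) = X ^ (2 * s + 2 - (k : ℝ)) := by
        rw [← Real.rpow_add hX0]; ring_nf
      have hXle : X ^ (2 * s + 2 - (k : ℝ)) ≤ 1 / X := by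
        have := Real.rpow_le_rpow_of_exponent_le hX1.le
          (show 2 * s + 2 - (k : ℝ) ≤ -1 by linarith)
        rwa [Real.rpow_neg_one, ← one_div] at this
      have hc2_le : c2 ≤ (A * B * 3 ^ s * ((4 : ℝ) ^ (s + 2 - (k : ℝ)))⁻¹) *
          X ^ (2 * s + 2 - (k : ℝ)) := by
        rw [hc2_def, hX4]
        have hXs2 : (0 : ℝ) ≤ X ^ (s + 2 - (k : ℝ)) := Real.rpow_nonneg hX0.le _
        have h4i : (0 : ℝ) ≤ ((4 : ℝ) ^ (s + 2 - (k : ℝ)))⁻¹ := by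
          have : (0 : ℝ) < (4 : ℝ) ^ (s + 2 - (k : ℝ)) := Real.rpow_pos_of_pos (by norm_num) _
          positivity
        calc cx * (X ^ (s + 2 - (k : ℝ)) * ((4 : ℝ) ^ (s + 2 - (k : ℝ)))⁻¹)
            ≤ (A * B * 3 ^ s * X ^ s) * (X ^ (s + 2 - (k : ℝ)) * ((4 : ℝ) ^ (s + 2 - (k : ℝ)))⁻¹) := by
              exact mul_le_mul_of_nonneg_right hcx_le (by positivity)
          _ = (A * B * 3 ^ s * ((4 : ℝ) ^ (s + 2 - (k : ℝ)))⁻¹) *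
              (X ^ s * X ^ (s + 2 - (k : ℝ))) := by ring
          _ = _ := by rw [hXe]
      calc c2 * J ≤ ((A * B * 3 ^ s * ((4 : ℝ) ^ (s + 2 - (k : ℝ)))⁻¹) *
              X ^ (2 * s + 2 - (k : ℝ))) * J := mul_le_mul_of_nonneg_right hc2_le hJ0
        _ = (A * B * 3 ^ s * (((4 : ℝ) ^ (s + 2 - (k : ℝ)))⁻¹ * J)) *
              X ^ (2 * s + 2 - (k : ℝ)) := by ring
        _ ≤ (A * B * 3 ^ s * (((4 : ℝ) ^ (s + 2 - (k : ℝ)))⁻¹ * J)) * (1 / X) := by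
              refine mul_le_mul_of_nonneg_left hXle ?_
              have h4i : (0 : ℝ) < (4 : ℝ) ^ (s + 2 - (k : ℝ)) :=
                Real.rpow_pos_of_pos (by norm_num) _
              positivity
        _ = D / X := by rw [hD_def]; ring
    calc ∫ t in (Set.Ioc X (2 * X))ᶜ, |R t * ψ (x - t)| ≤ ∫ t : ℝ, G t := h1.trans h2
      _ = c2 * J := hGtotal
      _ ≤ D / X := h3
  -- pointwise lower bound on the convolution
  have hconv_low : ∀ x ∈ Set.Icc (5 / 4 * X) (7 / 4 * X), C / 2 * X ^ α ≤ conv x := by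
    intro x hx
    obtain ⟨hx1, hx2⟩ := hx
    have hxx₀ : x₀ < x := by linarith
    have h0 := hlow x hxx₀
    have habs : |∫ t : ℝ, R t * ψ (x - t)| ≤ ∫ t : ℝ, |R t * ψ (x - t)| := by
      simpa only [Real.norm_eq_abs] using
        norm_integral_le_integral_norm (μ := volume) (fun t : ℝ => R t * ψ (x - t))
    have hsplit : (∫ t in Set.Ioc X (2 * X), |R t * ψ (x - t)|) +
        (∫ t in (Set.Ioc X (2 * X))ᶜ, |R t * ψ (x - t)|) = ∫ t : ℝ, |R t * ψ (x - t)| :=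
      integral_add_compl measurableSet_Ioc (hInt x).abs
    have hIoc : (∫ t in Set.Ioc X (2 * X), |R t * ψ (x - t)|) = conv x := by
      rw [hconv_eq x]
      exact setIntegral_congr_fun measurableSet_Ioc fun t _ => abs_mul _ _
    have hDX : D / X ≤ C / 2 := by
      rw [div_le_iff₀ hX0]
      have : 2 * D < C * X := by
        have := (div_lt_iff₀ hC).mp hXD
        linarith
      linarith
    have hXα : (1 : ℝ) ≤ X ^ α := by
      have := Real.rpow_le_rpow_of_exponent_le hX1.le hα.le
      rwa [Real.rpow_zero] at this
    have hxα : X ^ α ≤ x ^ α :=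
      Real.rpow_le_rpow hX0.le (by linarith) hα.le
    have hCx : C * X ^ α ≤ C * x ^ α := mul_le_mul_of_nonneg_left hxα hC.le
    have ht := htail x ⟨hx1, hx2⟩
    have hCX2 : C / 2 ≤ C / 2 * X ^ α := by nlinarith
    linarith
  -- integrate over the window
  have hvol : (volume (Set.Icc (5 / 4 * X) (7 / 4 * X))).toReal = X / 2 := by
    rw [Real.volume_Icc, ENNReal.toReal_ofReal (by linarith)]; ring
  have hlower : (C / 2 * X ^ α) * (X / 2) ≤ ∫ x in Set.Icc (5 / 4 * X) (7 / 4 * X), conv x := by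
    have h := setIntegral_ge_of_const_le_real measurableSet_Icc
      (by rw [Real.volume_Icc]; exact ENNReal.ofReal_ne_top) hconv_low hconv_int.integrableOn
    rwa [measureReal_def, hvol] at h
  have hupper : ∫ x in Set.Icc (5 / 4 * X) (7 / 4 * X), conv x ≤ ∫ x : ℝ, conv x :=
    setIntegral_le_integral hconv_int (ae_of_all _ hconv_nonneg)
  set I : ℝ := ∫ t in Set.Ioc X (2 * X), |R t| with hI_def
  have hI0 : 0 ≤ I := setIntegral_nonneg measurableSet_Ioc fun t _ => abs_nonneg _
  have hmain : (C / 2 * X ^ α) * (X / 2) ≤ I * M := by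
    have hψM : (∫ u : ℝ, |ψ u|) ≤ M := by rw [hM_def]; linarith
    calc (C / 2 * X ^ α) * (X / 2) ≤ ∫ x : ℝ, conv x := hlower.trans hupper
      _ = I * ∫ u : ℝ, |ψ u| := hconv_total
      _ ≤ I * M := mul_le_mul_of_nonneg_left hψM hI0
  -- conclude
  rw [intervalIntegral.integral_of_le (by linarith : X ≤ 2 * X)]
  have hIM : C * X ^ α * X ≤ 4 * (I * M) := by nlinarith
  have h3 := mul_le_mul_of_nonneg_left hIM (inv_pos.mpr hX0).le
  rw [div_mul_eq_mul_div, div_le_iff₀ (show (0 : ℝ) < 4 * M by positivity)]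
  calc C * X ^ α = X⁻¹ * (C * X ^ α * X) := by field_simp
    _ ≤ X⁻¹ * (4 * (I * M)) := h3
    _ = 1 / X * (∫ t in Set.Ioc X (2 * X), |R t|) * (4 * M) := by rw [hI_def]; ring
end

section
/- Let R : ℝ → ℝ be locally integrable with polynomial growth, and ψ a Schwartz function. If |∫ R(t) ψ(x-t) dt| ≫ x^α, then for any β > 0, X^{-β} ∫_X^{X + X^β} |R(t)| dt ≫ X^α; that is, the averaged lower bound holds over intervals of length X^β for any β > 0. -/
set_option maxHeartbeats 4000000

open MeasureTheory Real Filter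
open scoped ENNReal

lemma schwartz_decay_bound (ψ : SchwartzMap ℝ ℝ) (k : ℕ) :
    ∃ D : ℝ, 0 < D ∧ ∀ u : ℝ, |ψ u| * (1 + |u|) ^ k ≤ D := by
  obtain ⟨D₀, hD₀pos, hD₀⟩ := ψ.decay 0 0
  obtain ⟨D₁, hD₁pos, hD₁⟩ := ψ.decay k 0
  simp only [norm_iteratedFDeriv_zero, pow_zero, one_mul, Real.norm_eq_abs] at hD₀ hD₁
  refine ⟨2 ^ k * (D₀ + D₁) + 1, by positivity, fun u => ?_⟩
  have hu : (0:ℝ) ≤ |u| := abs_nonneg u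
  have hψ : (0:ℝ) ≤ |ψ u| := abs_nonneg _
  rcases le_total |u| 1 with h | h
  · have hpow : (1 + |u|) ^ k ≤ 2 ^ k := pow_le_pow_left₀ (by linarith) (by linarith) k
    nlinarith [pow_nonneg (by linarith : (0:ℝ) ≤ 1 + |u|) k, pow_pos (by norm_num : (0:ℝ) < 2) k,
      hD₀ u, mul_le_mul_of_nonneg_left hpow hψ]
  · have hpow : (1 + |u|) ^ k ≤ 2 ^ k * |u| ^ k := by
      calc (1 + |u|) ^ k ≤ (2 * |u|) ^ k := pow_le_pow_left₀ (by linarith) (by linarith) k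
      _ = 2 ^ k * |u| ^ k := mul_pow 2 |u| k
    have := hD₁ u
    nlinarith [pow_pos (by norm_num : (0:ℝ) < 2) k, mul_le_mul_of_nonneg_left hpow hψ,
      pow_nonneg hu k]

/-- Sarnak's calculus lemma on short intervals: the averaged lower bound holds over
intervals of length `X ^ β` for any `β > 0`. -/
theorem sarnak_calculus_lemma_short_intervals
    (R : ℝ → ℝ) (hR : LocallyIntegrable R volume)
    (s : ℝ) (hs : 0 < s)
    (hgrowth : ∃ C : ℝ, 0 < C ∧ ∀ t : ℝ, |R t| ≤ C * (1 + |t|) ^ s)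
    (ψ : SchwartzMap ℝ ℝ)
    (α C x₀ : ℝ) (hα : 0 < α) (hC : 0 < C) (hx₀ : 0 < x₀)
    (hlow : ∀ x : ℝ, x₀ < x → C * x ^ α ≤ |∫ t : ℝ, R t * ψ (x - t)|)
    (β : ℝ) (hβ : 0 < β) :
    ∃ C' X₀ : ℝ, 0 < C' ∧ 0 < X₀ ∧
      ∀ X : ℝ, X₀ < X →
        C' * X ^ α ≤ X ^ (-β) * ∫ t in X..(X + X ^ β), |R t| := by
  obtain ⟨C₀, hC₀, hRg⟩ := hgrowth
  set S : ℕ := ⌈s⌉₊ with hS_def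
  have hsS : s ≤ (S : ℝ) := Nat.le_ceil s
  set γ : ℝ := max 1 β with hγ_def
  have hγ1 : 1 ≤ γ := le_max_left 1 β
  have hγβ : β ≤ γ := le_max_right 1 β
  obtain ⟨m, hm⟩ : ∃ m : ℕ, γ * ((S : ℝ) + 2) + 1 ≤ (m : ℝ) * (β / 2) := by
    refine ⟨⌈(γ * ((S : ℝ) + 2) + 1) * (2 / β)⌉₊, ?_⟩
    have h0 := Nat.le_ceil ((γ * ((S : ℝ) + 2) + 1) * (2 / β))
    calc γ * ((S : ℝ) + 2) + 1 = ((γ * ((S : ℝ) + 2) + 1) * (2 / β)) * (β / 2) := by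
          field_simp
      _ ≤ _ := mul_le_mul_of_nonneg_right h0 (by positivity)
  obtain ⟨D, hD, hψD⟩ := schwartz_decay_bound ψ (m + (S + 2))
  set M : ℝ := (∫ u : ℝ, |ψ u|) + 1 with hM_def
  have hM : 0 < M := by
    have : 0 ≤ ∫ u : ℝ, |ψ u| := integral_nonneg fun u => abs_nonneg _
    linarith
  have hπ : 0 < π := Real.pi_pos
  have hc₄ : (0:ℝ) < (4:ℝ) ^ (2 / β) := Real.rpow_pos_of_pos (by norm_num) _
  have hcK : (0:ℝ) < π * C₀ * D * 3 ^ (S + 2) * (2 / C) := by positivity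
  refine ⟨C / (4 * M), x₀ + 1 + (4:ℝ) ^ (2 / β) + π * C₀ * D * 3 ^ (S + 2) * (2 / C),
    by positivity, by positivity, ?_⟩
  intro X hX
  -- basic facts about X
  have hXx₀ : x₀ < X := by linarith
  have hX1 : 1 ≤ X := by linarith
  have hX0 : 0 < X := by linarith
  have hXβ4 : (4:ℝ) ^ (2 / β) ≤ X := by linarith
  have hXK : π * C₀ * D * 3 ^ (S + 2) * (2 / C) < X := by linarith
  set H : ℝ := X ^ (β / 2) with hH_def
  have hH0 : 0 < H := Real.rpow_pos_of_pos hX0 _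
  have hH1 : 1 ≤ H := by
    have := Real.rpow_le_rpow_of_exponent_le hX1 (by positivity : (0:ℝ) ≤ β / 2)
    rwa [Real.rpow_zero] at this
  have hH4 : 4 ≤ H := by
    have h1 : ((4:ℝ) ^ (2 / β)) ^ (β / 2) ≤ X ^ (β / 2) :=
      Real.rpow_le_rpow (le_of_lt hc₄) hXβ4 (by positivity)
    have h2 : ((4:ℝ) ^ (2 / β)) ^ (β / 2) = 4 := by
      rw [← Real.rpow_mul (by norm_num : (0:ℝ) ≤ 4)]
      rw [show (2 / β) * (β / 2) = 1 by field_simp]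
      norm_num
    rw [h2] at h1; exact h1
  have hXβHH : X ^ β = H * H := by
    rw [hH_def, ← Real.rpow_add hX0]; ring_nf
  have hXβ0 : 0 < X ^ β := Real.rpow_pos_of_pos hX0 β
  set a : ℝ := X + H with ha_def
  set b : ℝ := X + X ^ β - H with hb_def
  have ha0 : 0 < a := by positivity
  have hax₀ : x₀ < a := by simp only [ha_def]; linarith
  have hba2 : H * H / 2 ≤ b - a := by
    simp only [ha_def, hb_def]
    nlinarith
  have hba0 : 0 < b - a := by nlinarith
  have hbX : b ≤ X + X ^ β := by simp only [hb_def]; linarith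
  set I : Set ℝ := Set.Ioc X (X + X ^ β) with hI_def
  set J : ℝ := ∫ t in I, |R t| with hJ_def
  have hRI : IntegrableOn (fun t => |R t|) I volume :=
    ((hR.integrableOn_isCompact (isCompact_Icc (a := X) (b := X + X ^ β))).mono_set
      Set.Ioc_subset_Icc_self).abs
  have hJ0 : 0 ≤ J := integral_nonneg fun t => abs_nonneg _
  have hJlin : ENNReal.ofReal J = ∫⁻ t in I, ENNReal.ofReal |R t| :=
    ofReal_integral_eq_lintegral_ofReal hRI (Eventually.of_forall fun t => abs_nonneg _)
  set K : ℝ := C₀ * D * (1 + (X + X ^ β)) ^ (S + 2) / (1 + H) ^ m with hK_def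
  have hK0 : 0 ≤ K := by positivity
  clear_value S γ M H a b J K
  -- pointwise tail bound
  have key : ∀ t ∉ I, ∀ x ∈ Set.Ioc a b, |R t| * |ψ (x - t)| ≤ K * (1 + t ^ 2)⁻¹ := by
    intro t ht x hx
    obtain ⟨hxa, hxb⟩ := hx
    have hx0 : 0 < x := lt_trans ha0 hxa
    have hxB : x ≤ X + X ^ β := le_trans hxb hbX
    have hd : H ≤ |x - t| := by
      rw [hI_def, Set.mem_Ioc, not_and_or] at ht
      rcases ht with h | h
      · push_neg at h
        have h2 : H ≤ x - t := by
          have h3 : X + H < x := ha_def ▸ hxa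
          linarith
        exact le_trans h2 (le_abs_self _)
      · push_neg at h
        have h2 : H ≤ t - x := by
          have h3 : x ≤ X + X ^ β - H := hb_def ▸ hxb
          linarith
        calc H ≤ t - x := h2
          _ ≤ |t - x| := le_abs_self _
          _ = |x - t| := abs_sub_comm t x
    have hT1 : 1 ≤ 1 + |t| := by linarith [abs_nonneg t]
    have hT0 : (0:ℝ) < 1 + |t| := by linarith
    have hP0 : (0:ℝ) < (1 + H) ^ m := by positivity
    have hQ0 : (0:ℝ) < (1 + x) ^ (S + 2) := by positivity
    have htri : 1 + |t| ≤ (1 + x) * (1 + |x - t|) := by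
      have h1 : |t| ≤ |x| + |t - x| := by
        calc |t| = |x + (t - x)| := by ring_nf
          _ ≤ |x| + |t - x| := abs_add_le _ _
      rw [abs_of_pos hx0] at h1
      rw [abs_sub_comm t x] at h1
      have h2 : (1 + x) * (1 + |x - t|) = 1 + x + |x - t| + x * |x - t| := by ring
      have h3 : 0 ≤ x * |x - t| := mul_nonneg hx0.le (abs_nonneg _)
      linarith
    -- Schwartz decay estimate
    have hψ2 : |ψ (x - t)| ≤ D / ((1 + H) ^ m * (((1 + |t|) / (1 + x)) ^ (S + 2))) := by
      have hsplit : (1 + H) ^ m * (((1 + |t|) / (1 + x)) ^ (S + 2))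
          ≤ (1 + |x - t|) ^ (m + (S + 2)) := by
        rw [pow_add (1 + |x - t|) m (S + 2)]
        have part1 : (1 + H) ^ m ≤ (1 + |x - t|) ^ m :=
          pow_le_pow_left₀ (by positivity) (by linarith) m
        have part2 : ((1 + |t|) / (1 + x)) ^ (S + 2) ≤ (1 + |x - t|) ^ (S + 2) := by
          apply pow_le_pow_left₀ (by positivity)
          rw [div_le_iff₀ (by linarith), mul_comm]
          exact htri
        exact mul_le_mul part1 part2 (by positivity) (by positivity)
      have h1 : |ψ (x - t)| * ((1 + H) ^ m * (((1 + |t|) / (1 + x)) ^ (S + 2))) ≤ D := by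
        calc |ψ (x - t)| * ((1 + H) ^ m * (((1 + |t|) / (1 + x)) ^ (S + 2)))
            ≤ |ψ (x - t)| * (1 + |x - t|) ^ (m + (S + 2)) :=
              mul_le_mul_of_nonneg_left hsplit (abs_nonneg _)
          _ ≤ D := hψD (x - t)
      have hc0 : (0:ℝ) < (1 + H) ^ m * (((1 + |t|) / (1 + x)) ^ (S + 2)) := by positivity
      exact (le_div_iff₀ hc0).2 h1
    have hR1 : |R t| ≤ C₀ * (1 + |t|) ^ S := by
      calc |R t| ≤ C₀ * (1 + |t|) ^ s := hRg t
        _ ≤ C₀ * (1 + |t|) ^ (S:ℝ) :=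
          mul_le_mul_of_nonneg_left (Real.rpow_le_rpow_of_exponent_le hT1 hsS) hC₀.le
        _ = C₀ * (1 + |t|) ^ S := by rw [Real.rpow_natCast]
    have step1 : |R t| * |ψ (x - t)|
        ≤ (C₀ * (1 + |t|) ^ S) * (D / ((1 + H) ^ m * (((1 + |t|) / (1 + x)) ^ (S + 2)))) :=
      mul_le_mul hR1 hψ2 (abs_nonneg _) (by positivity)
    have step2 : (C₀ * (1 + |t|) ^ S) * (D / ((1 + H) ^ m * (((1 + |t|) / (1 + x)) ^ (S + 2))))
        = C₀ * D * (1 + x) ^ (S + 2) / ((1 + H) ^ m * (1 + |t|) ^ 2) := by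
      rw [div_pow, pow_add]
      field_simp
    have hQQX : (1 + x) ^ (S + 2) ≤ (1 + (X + X ^ β)) ^ (S + 2) :=
      pow_le_pow_left₀ (by positivity) (by linarith) _
    have hT2 : 1 + t ^ 2 ≤ (1 + |t|) ^ 2 := by
      have h1 : 0 ≤ |t| := abs_nonneg t
      calc 1 + t ^ 2 = 1 + |t| ^ 2 := by rw [sq_abs]
        _ ≤ 1 + 2 * |t| + |t| ^ 2 := by linarith
        _ = (1 + |t|) ^ 2 := by ring
    have step3 : C₀ * D * (1 + x) ^ (S + 2) / ((1 + H) ^ m * (1 + |t|) ^ 2)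
        ≤ C₀ * D * (1 + (X + X ^ β)) ^ (S + 2) / ((1 + H) ^ m * (1 + t ^ 2)) := by
      apply div_le_div₀ (by positivity) (mul_le_mul_of_nonneg_left hQQX (by positivity))
        (by positivity) (mul_le_mul_of_nonneg_left hT2 hP0.le)
    have step4 : C₀ * D * (1 + (X + X ^ β)) ^ (S + 2) / ((1 + H) ^ m * (1 + t ^ 2))
        = K * (1 + t ^ 2)⁻¹ := by
      have hne1 : ((1 + H) ^ m : ℝ) ≠ 0 := by positivity
      have hne2 : ((1 + t ^ 2) : ℝ) ≠ 0 := by positivity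
      rw [hK_def]
      field_simp
    calc |R t| * |ψ (x - t)|
        ≤ (C₀ * (1 + |t|) ^ S) * (D / ((1 + H) ^ m * (((1 + |t|) / (1 + x)) ^ (S + 2)))) := step1
      _ = C₀ * D * (1 + x) ^ (S + 2) / ((1 + H) ^ m * (1 + |t|) ^ 2) := step2
      _ ≤ C₀ * D * (1 + (X + X ^ β)) ^ (S + 2) / ((1 + H) ^ m * (1 + t ^ 2)) := step3
      _ = K * (1 + t ^ 2)⁻¹ := step4
  have hImeas : MeasurableSet I := hI_def ▸ measurableSet_Ioc
  have main : ENNReal.ofReal (C * a ^ α) * ENNReal.ofReal (b - a)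
      ≤ ENNReal.ofReal J * ENNReal.ofReal M + ENNReal.ofReal (K * (b - a)) * ENNReal.ofReal π := by
    have hmble : AEMeasurable
        (Function.uncurry fun x t => ENNReal.ofReal |R t| * ENNReal.ofReal |ψ (x - t)|)
        ((volume.restrict (Set.Ioc a b)).prod volume) := by
      have h1 : AEMeasurable (fun p : ℝ × ℝ => ENNReal.ofReal |R p.2|)
          ((volume.restrict (Set.Ioc a b)).prod volume) :=
        (ENNReal.measurable_ofReal.comp_aemeasurable
          (measurable_abs.comp_aemeasurable hR.aestronglyMeasurable.aemeasurable)).comp_snd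
      have h2 : Measurable fun p : ℝ × ℝ => ENNReal.ofReal |ψ (p.1 - p.2)| :=
        ENNReal.measurable_ofReal.comp
          ((ψ.continuous.measurable.comp (measurable_fst.sub measurable_snd)).abs)
      exact h1.mul h2.aemeasurable
    have hWle : ∀ t : ℝ, (∫⁻ x in Set.Ioc a b, ENNReal.ofReal |ψ (x - t)|) ≤ ENNReal.ofReal M := by
      intro t
      calc (∫⁻ x in Set.Ioc a b, ENNReal.ofReal |ψ (x - t)|)
          ≤ ∫⁻ x, ENNReal.ofReal |ψ (x - t)| := setLIntegral_le_lintegral _ _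
        _ = ∫⁻ x, ENNReal.ofReal |ψ x| :=
            lintegral_sub_right_eq_self (fun x => ENNReal.ofReal |ψ x|) t
        _ = ENNReal.ofReal (∫ x, |ψ x|) :=
            (ofReal_integral_eq_lintegral_ofReal ψ.integrable.abs
              (Eventually.of_forall fun x => abs_nonneg _)).symm
        _ ≤ ENNReal.ofReal M := ENNReal.ofReal_le_ofReal (by rw [hM_def]; linarith)
    calc ENNReal.ofReal (C * a ^ α) * ENNReal.ofReal (b - a)
        = ∫⁻ _x in Set.Ioc a b, ENNReal.ofReal (C * a ^ α) := by
          rw [setLIntegral_const, Real.volume_Ioc]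
      _ ≤ ∫⁻ x in Set.Ioc a b, ∫⁻ t, ENNReal.ofReal |R t| * ENNReal.ofReal |ψ (x - t)| := by
          refine lintegral_mono_ae ((ae_restrict_iff' measurableSet_Ioc).2
            (Eventually.of_forall fun x hx => ?_))
          have hx₀x : x₀ < x := lt_trans hax₀ hx.1
          have h1 := hlow x hx₀x
          have h2 : C * a ^ α ≤ C * x ^ α :=
            mul_le_mul_of_nonneg_left (Real.rpow_le_rpow ha0.le hx.1.le hα.le) hC.le
          have h3 : ‖∫ t, R t * ψ (x - t)‖ ≤ (∫⁻ t, ENNReal.ofReal ‖R t * ψ (x - t)‖).toReal :=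
            norm_integral_le_lintegral_norm _
          have h4 : (∫⁻ t, ENNReal.ofReal ‖R t * ψ (x - t)‖)
              = ∫⁻ t, ENNReal.ofReal |R t| * ENNReal.ofReal |ψ (x - t)| := by
            refine lintegral_congr fun t => ?_
            rw [Real.norm_eq_abs, abs_mul, ENNReal.ofReal_mul (abs_nonneg _)]
          apply ENNReal.ofReal_le_of_le_toReal
          rw [← h4]
          calc C * a ^ α ≤ C * x ^ α := h2
            _ ≤ |∫ t, R t * ψ (x - t)| := h1
            _ = ‖∫ t, R t * ψ (x - t)‖ := (Real.norm_eq_abs _).symm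
            _ ≤ _ := h3
      _ = ∫⁻ t, ∫⁻ x in Set.Ioc a b, ENNReal.ofReal |R t| * ENNReal.ofReal |ψ (x - t)| :=
          lintegral_lintegral_swap hmble
      _ = ∫⁻ t, ENNReal.ofReal |R t| * ∫⁻ x in Set.Ioc a b, ENNReal.ofReal |ψ (x - t)| :=
          lintegral_congr fun t => lintegral_const_mul' _ _ ENNReal.ofReal_ne_top
      _ = (∫⁻ t in I, ENNReal.ofReal |R t| * ∫⁻ x in Set.Ioc a b, ENNReal.ofReal |ψ (x - t)|)
          + ∫⁻ t in Iᶜ, ENNReal.ofReal |R t| * ∫⁻ x in Set.Ioc a b, ENNReal.ofReal |ψ (x - t)| :=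
          (lintegral_add_compl _ hImeas).symm
      _ ≤ ENNReal.ofReal J * ENNReal.ofReal M + ENNReal.ofReal (K * (b - a)) * ENNReal.ofReal π := by
          apply add_le_add
          · calc ∫⁻ t in I, ENNReal.ofReal |R t| * ∫⁻ x in Set.Ioc a b, ENNReal.ofReal |ψ (x - t)|
                ≤ ∫⁻ t in I, ENNReal.ofReal |R t| * ENNReal.ofReal M :=
                  lintegral_mono fun t => mul_le_mul_right (hWle t) _
              _ = (∫⁻ t in I, ENNReal.ofReal |R t|) * ENNReal.ofReal M :=
                  lintegral_mul_const' _ _ ENNReal.ofReal_ne_top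
              _ = ENNReal.ofReal J * ENNReal.ofReal M := by rw [hJlin]
          · calc ∫⁻ t in Iᶜ, ENNReal.ofReal |R t| * ∫⁻ x in Set.Ioc a b, ENNReal.ofReal |ψ (x - t)|
                ≤ ∫⁻ t in Iᶜ, ENNReal.ofReal (K * (1 + t ^ 2)⁻¹) * ENNReal.ofReal (b - a) := by
                  refine lintegral_mono_ae ((ae_restrict_iff' hImeas.compl).2
                    (Eventually.of_forall fun t ht => ?_))
                  calc ENNReal.ofReal |R t| * ∫⁻ x in Set.Ioc a b, ENNReal.ofReal |ψ (x - t)|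
                      = ∫⁻ x in Set.Ioc a b, ENNReal.ofReal |R t| * ENNReal.ofReal |ψ (x - t)| :=
                        (lintegral_const_mul' _ _ ENNReal.ofReal_ne_top).symm
                    _ ≤ ∫⁻ _x in Set.Ioc a b, ENNReal.ofReal (K * (1 + t ^ 2)⁻¹) := by
                        refine lintegral_mono_ae ((ae_restrict_iff' measurableSet_Ioc).2
                          (Eventually.of_forall fun x hx => ?_))
                        rw [← ENNReal.ofReal_mul (abs_nonneg _)]
                        exact ENNReal.ofReal_le_ofReal (key t ht x hx)
                    _ = ENNReal.ofReal (K * (1 + t ^ 2)⁻¹) * ENNReal.ofReal (b - a) := by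
                        rw [setLIntegral_const, Real.volume_Ioc]
              _ ≤ ∫⁻ t, ENNReal.ofReal (K * (1 + t ^ 2)⁻¹) * ENNReal.ofReal (b - a) :=
                  setLIntegral_le_lintegral _ _
              _ = (∫⁻ t, ENNReal.ofReal (K * (1 + t ^ 2)⁻¹)) * ENNReal.ofReal (b - a) :=
                  lintegral_mul_const' _ _ ENNReal.ofReal_ne_top
              _ = (ENNReal.ofReal K * ∫⁻ t, ENNReal.ofReal ((1 + t ^ 2)⁻¹)) * ENNReal.ofReal (b - a) := by
                  rw [← lintegral_const_mul' _ _ ENNReal.ofReal_ne_top]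
                  refine congrArg (· * ENNReal.ofReal (b - a)) (lintegral_congr fun t => ?_)
                  rw [← ENNReal.ofReal_mul hK0]
              _ = (ENNReal.ofReal K * ENNReal.ofReal π) * ENNReal.ofReal (b - a) := by
                  rw [← ofReal_integral_eq_lintegral_ofReal integrable_inv_one_add_sq
                    (Eventually.of_forall fun t => by positivity),
                    integral_univ_inv_one_add_sq]
              _ = ENNReal.ofReal (K * (b - a)) * ENNReal.ofReal π := by
                  rw [ENNReal.ofReal_mul hK0]
                  ring
  -- convert to real
  have hreal : C * a ^ α * (b - a) ≤ J * M + K * (b - a) * π := by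
    have hJM : 0 ≤ J * M := mul_nonneg hJ0 (le_of_lt hM)
    have hKp : 0 ≤ K * (b - a) * π := by positivity
    have h1 : ENNReal.ofReal (C * a ^ α * (b - a))
        ≤ ENNReal.ofReal (J * M + K * (b - a) * π) := by
      rw [ENNReal.ofReal_mul (p := C * a ^ α) (by positivity),
        ENNReal.ofReal_add hJM hKp, ENNReal.ofReal_mul (p := J) hJ0,
        ENNReal.ofReal_mul (p := K * (b - a)) (by positivity)]
      exact main
    exact (ENNReal.ofReal_le_ofReal_iff (by linarith)).1 h1
  -- bound on K
  have hKπ : K * π ≤ C / 2 := by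
    have hXγ0 : 0 < X ^ γ := Real.rpow_pos_of_pos hX0 _
    have hb3 : 1 + (X + X ^ β) ≤ 3 * X ^ γ := by
      have h1 : X ≤ X ^ γ := by
        nth_rewrite 1 [← Real.rpow_one X]
        exact Real.rpow_le_rpow_of_exponent_le hX1 hγ1
      have h2 : X ^ β ≤ X ^ γ := Real.rpow_le_rpow_of_exponent_le hX1 hγβ
      have h3 : 1 ≤ X ^ γ := by
        have h := Real.rpow_le_rpow_of_exponent_le hX1 (le_trans zero_le_one hγ1)
        rwa [Real.rpow_zero] at h
      linarith
    have hpow3 : (1 + (X + X ^ β)) ^ (S + 2) ≤ 3 ^ (S + 2) * X ^ (γ * ((S:ℝ) + 2)) := by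
      have h1 : (1 + (X + X ^ β)) ^ (S + 2) ≤ (3 * X ^ γ) ^ (S + 2) :=
        pow_le_pow_left₀ (by positivity) hb3 _
      have h2 : (3 * X ^ γ) ^ (S + 2) = 3 ^ (S + 2) * (X ^ γ) ^ (S + 2) := mul_pow _ _ _
      have h3 : (X ^ γ) ^ (S + 2) = X ^ (γ * ((S:ℝ) + 2)) := by
        rw [← Real.rpow_natCast (X ^ γ) (S + 2), ← Real.rpow_mul hX0.le]
        push_cast
        ring_nf
      rw [h2, h3] at h1
      exact h1
    have hHm : X ^ ((m:ℝ) * (β / 2)) ≤ (1 + H) ^ m := by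
      have h1 : H ^ m ≤ (1 + H) ^ m := pow_le_pow_left₀ hH0.le (by linarith) m
      have h2 : H ^ m = X ^ ((m:ℝ) * (β / 2)) := by
        rw [hH_def, ← Real.rpow_natCast (X ^ (β / 2)) m, ← Real.rpow_mul hX0.le]
        ring_nf
      rw [← h2]
      exact h1
    have hK1 : K ≤ C₀ * D * 3 ^ (S + 2) * X ^ (-(1:ℝ)) := by
      rw [hK_def]
      calc C₀ * D * (1 + (X + X ^ β)) ^ (S + 2) / (1 + H) ^ m
          ≤ C₀ * D * (3 ^ (S + 2) * X ^ (γ * ((S:ℝ) + 2))) / X ^ ((m:ℝ) * (β / 2)) := by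
            apply div_le_div₀ (by positivity)
              (mul_le_mul_of_nonneg_left hpow3 (by positivity))
              (Real.rpow_pos_of_pos hX0 _) hHm
        _ = C₀ * D * 3 ^ (S + 2) * X ^ (γ * ((S:ℝ) + 2) - (m:ℝ) * (β / 2)) := by
            rw [Real.rpow_sub hX0]
            ring
        _ ≤ C₀ * D * 3 ^ (S + 2) * X ^ (-(1:ℝ)) := by
            apply mul_le_mul_of_nonneg_left
              (Real.rpow_le_rpow_of_exponent_le hX1 (by linarith)) (by positivity)
    have hK1' : K ≤ C₀ * D * 3 ^ (S + 2) * X⁻¹ := by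
      rwa [Real.rpow_neg_one] at hK1
    have h1 : K * π ≤ (C₀ * D * 3 ^ (S + 2) * X⁻¹) * π :=
      mul_le_mul_of_nonneg_right hK1' hπ.le
    have h2 : (C₀ * D * 3 ^ (S + 2) * X⁻¹) * π ≤ C / 2 := by
      rw [show (C₀ * D * 3 ^ (S + 2) * X⁻¹) * π = (π * C₀ * D * 3 ^ (S + 2)) / X by ring,
        div_le_iff₀ hX0]
      have e : π * C₀ * D * 3 ^ (S + 2) * (2 / C) * (C / 2) = π * C₀ * D * 3 ^ (S + 2) := by
        field_simp
      have h3 := mul_lt_mul_of_pos_right hXK (half_pos hC)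
      rw [e] at h3
      linarith
    linarith
  -- final arithmetic
  have haα : X ^ α ≤ a ^ α := Real.rpow_le_rpow (le_of_lt hX0) (by simp only [ha_def]; linarith) (le_of_lt hα)
  have hXα1 : 1 ≤ X ^ α := by
    have := Real.rpow_le_rpow_of_exponent_le hX1 (le_of_lt hα)
    rwa [Real.rpow_zero] at this
  have hJge : C / 4 * (X ^ α * X ^ β) / M ≤ J := by
    have h2 : K * (b - a) * π ≤ C / 2 * X ^ α * (b - a) := by
      have h20 : K * π * (b - a) ≤ (C / 2 * X ^ α) * (b - a) := by
        apply mul_le_mul_of_nonneg_right _ (le_of_lt hba0)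
        calc K * π ≤ C / 2 := hKπ
          _ ≤ C / 2 * X ^ α := le_mul_of_one_le_right (by positivity) hXα1
      calc K * (b - a) * π = K * π * (b - a) := by ring
        _ ≤ C / 2 * X ^ α * (b - a) := h20
    have h3 : C * X ^ α * (b - a) ≤ C * a ^ α * (b - a) :=
      mul_le_mul_of_nonneg_right (mul_le_mul_of_nonneg_left haα hC.le) (le_of_lt hba0)
    have h4 : C / 2 * X ^ α * (b - a) ≤ J * M := by linarith
    have h5 : (C / 2 * X ^ α) * (H * H / 2) ≤ (C / 2 * X ^ α) * (b - a) :=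
      mul_le_mul_of_nonneg_left hba2 (by positivity)
    have h6 : C / 4 * (X ^ α * X ^ β) ≤ J * M := by
      rw [hXβHH]; linarith [h4, h5]
    rw [div_le_iff₀ hM]
    linarith
  have hintervalEq : (∫ t in X..(X + X ^ β), |R t|) = J := by
    rw [hJ_def, intervalIntegral.integral_of_le (by linarith : X ≤ X + X ^ β)]
  rw [hintervalEq]
  have hnegβ : 0 < X ^ (-β) := Real.rpow_pos_of_pos hX0 _
  have h7 : X ^ (-β) * (C / 4 * (X ^ α * X ^ β) / M) ≤ X ^ (-β) * J :=
    mul_le_mul_of_nonneg_left hJge (le_of_lt hnegβ)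
  have h8 : X ^ (-β) * (C / 4 * (X ^ α * X ^ β) / M) = C / (4 * M) * X ^ α := by
    have hXbb : X ^ (-β) * X ^ β = 1 := by
      rw [← Real.rpow_add hX0]; simp
    calc X ^ (-β) * (C / 4 * (X ^ α * X ^ β) / M)
        = C / (4 * M) * X ^ α * (X ^ (-β) * X ^ β) := by ring
      _ = C / (4 * M) * X ^ α := by rw [hXbb, mul_one]
  linarith [h7, h8.symm.le]
end

section
/- Let M be a smooth compact n-dimensional Riemannian manifold with boundary (n ≥ 2) such that ∫_M 𝒦 dV + 2n ∫_{∂M} H dA ≠ 0, where 𝒦 is the scalar curvature and H the mean curvature of the boundary. Assume the two-term smoothed Weyl expansion ∫ N(λ) ψ(λ − t) dt = Σ_{j≥0} a_j λ^{n−j} + O(λ^{−∞}) holds with a_2 = C(∫_M 𝒦 + 2n ∫_{∂M} H) for a nonzero constant C. Then the Weyl remainder satisfies (1/λ) ∫_λ^{2λ} |R(τ)| dτ ≫ λ^{n−2}. -/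
open MeasureTheory Real Filter Asymptotics FourierTransform

private lemma psi_decay (ψ : SchwartzMap ℝ ℝ) (k : ℕ) :
    ∃ Cd : ℝ, 0 ≤ Cd ∧ ∀ u : ℝ, (1 + |u|) ^ k * |ψ u| ≤ Cd * (1 + u ^ 2)⁻¹ := by
  set S : ℝ := 2 ^ (k + 2) *
    (Finset.Iic ((k + 2, 0) : ℕ × ℕ)).sup (fun m => SchwartzMap.seminorm ℝ m.1 m.2) ψ with hS
  refine ⟨S, ?_, ?_⟩
  · have h1 : (0:ℝ) ≤ (Finset.Iic ((k + 2, 0) : ℕ × ℕ)).sup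
        (fun m => SchwartzMap.seminorm ℝ m.1 m.2) ψ := apply_nonneg _ _
    positivity
  · intro u
    have h0 : (0:ℝ) < 1 + u ^ 2 := by positivity
    have key : (1 + |u|) ^ (k + 2) * |ψ u| ≤ S := by
      have := SchwartzMap.one_add_le_sup_seminorm_apply (𝕜 := ℝ)
        (m := ((k + 2, 0) : ℕ × ℕ)) (k := k + 2) (n := 0) le_rfl le_rfl ψ u
      simpa [norm_iteratedFDeriv_zero, Real.norm_eq_abs] using this
    have h2 : (1 + |u|) ^ k * |ψ u| * (1 + u ^ 2) ≤ S := by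
      calc (1 + |u|) ^ k * |ψ u| * (1 + u ^ 2)
          ≤ (1 + |u|) ^ k * |ψ u| * (1 + |u|) ^ 2 := by
            apply mul_le_mul_of_nonneg_left _ (by positivity)
            nlinarith [abs_nonneg u, sq_abs u]
        _ = (1 + |u|) ^ (k + 2) * |ψ u| := by ring
        _ ≤ S := key
    rw [← div_eq_mul_inv, le_div_iff₀ h0]
    exact h2

private lemma psi_base_int (ψ : SchwartzMap ℝ ℝ) (k : ℕ) :
    Integrable (fun u : ℝ => (1 + |u|) ^ k * |ψ u|) := by
  obtain ⟨Cd, hCd, h⟩ := psi_decay ψ k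
  refine (integrable_inv_one_add_sq.const_mul Cd).mono' ?_ ?_
  · exact (((continuous_const.add continuous_abs).pow k).mul
      (ψ.continuous.abs)).aestronglyMeasurable
  · refine Eventually.of_forall fun u => ?_
    have : (0:ℝ) ≤ (1 + |u|) ^ k * |ψ u| := by positivity
    rw [Real.norm_eq_abs, abs_of_nonneg this]
    exact h u

private lemma int_comp_sub (f : ℝ → ℝ) (c : ℝ) : (∫ t : ℝ, f (c - t)) = ∫ t : ℝ, f t := by
  calc (∫ t : ℝ, f (c - t)) = ∫ t : ℝ, f (c + -t) := by simp only [sub_eq_add_neg]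
    _ = ∫ t : ℝ, f (c + t) := integral_neg_eq_self (fun t => f (c + t)) volume
    _ = ∫ t : ℝ, f t := integral_add_left_eq_self (fun t => f t) c

private lemma integrable_comp_sub {f : ℝ → ℝ} (hf : Integrable f (volume : Measure ℝ)) (c : ℝ) :
    Integrable (fun t : ℝ => f (c - t)) := by
  have := (hf.comp_add_left c).comp_neg
  simpa [sub_eq_add_neg] using this

private lemma integral_ofReal' {f : ℝ → ℝ} :
    (∫ x : ℝ, ((f x : ℝ) : ℂ)) = ((∫ x : ℝ, f x : ℝ) : ℂ) :=
  integral_ofReal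

private lemma psi_pow_int (ψ : SchwartzMap ℝ ℝ) (k : ℕ) :
    Integrable (fun x : ℝ => x ^ k • ((ψ x : ℝ) : ℂ)) := by
  refine (ψ.integrable_pow_mul volume k).mono' ?_ ?_
  · exact ((continuous_pow k).smul
      (Complex.continuous_ofReal.comp ψ.continuous)).aestronglyMeasurable
  · refine Eventually.of_forall fun x => ?_
    simp [norm_smul]

private lemma deriv_iter_zero (m : ℕ) : deriv^[m] (fun _ : ℝ => (0 : ℂ)) = fun _ => 0 := by
  induction m with
  | zero => rfl
  | succ p ih => rw [Function.iterate_succ_apply, deriv_const']; exact ih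

private lemma psi_moment_zero (ψ : SchwartzMap ℝ ℝ)
    (hψ1 : (𝓕 fun t : ℝ => (ψ t : ℂ)) =ᶠ[nhds (0 : ℝ)] fun _ => 1) :
    (∫ t : ℝ, ψ t) = 1 := by
  have h0 : (𝓕 fun t : ℝ => (ψ t : ℂ)) 0 = 1 := hψ1.eq_of_nhds
  have h1 : (𝓕 fun t : ℝ => (ψ t : ℂ)) 0 = ∫ t : ℝ, (ψ t : ℂ) := by
    simp [Real.fourier_real_eq]
  rw [h1, integral_ofReal'] at h0
  exact_mod_cast h0

private lemma psi_moment_pos (ψ : SchwartzMap ℝ ℝ)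
    (hψ1 : (𝓕 fun t : ℝ => (ψ t : ℂ)) =ᶠ[nhds (0 : ℝ)] fun _ => 1)
    (k : ℕ) (hk : k ≠ 0) : (∫ t : ℝ, t ^ k * ψ t) = 0 := by
  have hint : ∀ n : ℕ, (n : ℕ∞) ≤ (⊤ : ℕ∞) →
      Integrable (fun x : ℝ => x ^ n • ((ψ x : ℝ) : ℂ)) := fun n _ => psi_pow_int ψ n
  have hd := Real.iteratedDeriv_fourier (f := fun t : ℝ => ((ψ t : ℝ) : ℂ))
      (N := (⊤ : ℕ∞)) (n := k) hint le_top
  have hev : ∀ m : ℕ, deriv^[m] (𝓕 fun t : ℝ => ((ψ t : ℝ) : ℂ)) =ᶠ[nhds (0:ℝ)]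
      deriv^[m] (fun _ : ℝ => (1 : ℂ)) := by
    intro m
    induction m with
    | zero => simpa using hψ1
    | succ p ih =>
        rw [Function.iterate_succ_apply', Function.iterate_succ_apply']
        exact ih.deriv
  have hL : iteratedDeriv k (𝓕 fun t : ℝ => ((ψ t : ℝ) : ℂ)) 0 = 0 := by
    rw [iteratedDeriv_eq_iterate]
    rw [(hev k).eq_of_nhds]
    obtain ⟨p, rfl⟩ := Nat.exists_eq_succ_of_ne_zero hk
    rw [Function.iterate_succ_apply, deriv_const', deriv_iter_zero]
  rw [hd] at hL
  -- now hL : 𝓕 (fun x => (-2πI x)^k • ψ x) 0 = 0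
  have h2 : (𝓕 fun x : ℝ => (-2 * Real.pi * Complex.I * (x:ℂ)) ^ k • ((ψ x : ℝ) : ℂ)) 0
      = ∫ x : ℝ, (-2 * Real.pi * Complex.I * (x:ℂ)) ^ k * ((ψ x : ℝ) : ℂ) := by
    simp [Real.fourier_real_eq, smul_eq_mul]
  rw [h2] at hL
  have h3 : (∫ x : ℝ, (-2 * Real.pi * Complex.I * (x:ℂ)) ^ k * ((ψ x : ℝ) : ℂ))
      = (-2 * Real.pi * Complex.I) ^ k * ∫ x : ℝ, ((x:ℂ)) ^ k * ((ψ x : ℝ) : ℂ) := by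
    rw [← MeasureTheory.integral_const_mul]
    congr 1
    funext x
    rw [mul_pow]
    ring
  rw [h3] at hL
  have h4 : (∫ x : ℝ, ((x:ℂ)) ^ k * ((ψ x : ℝ) : ℂ)) = ((∫ t : ℝ, t ^ k * ψ t : ℝ) : ℂ) := by
    rw [← integral_ofReal']
    congr 1
    funext x
    push_cast
    ring
  rw [h4] at hL
  have h5 : (-2 * (Real.pi:ℂ) * Complex.I) ^ k ≠ 0 := by
    apply pow_ne_zero
    simp [Real.pi_ne_zero, Complex.I_ne_zero]
  have := (mul_eq_zero.1 hL).resolve_left h5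
  exact_mod_cast this

private lemma integrable_pow_psi (ψ : SchwartzMap ℝ ℝ) (j : ℕ) :
    Integrable (fun u : ℝ => u ^ j * ψ u) := by
  refine (psi_base_int ψ j).mono'
    (((continuous_pow j).mul ψ.continuous).aestronglyMeasurable)
    (Eventually.of_forall fun u => ?_)
  rw [Real.norm_eq_abs, abs_mul, abs_pow]
  exact mul_le_mul_of_nonneg_right
    (pow_le_pow_left₀ (abs_nonneg u) (by linarith [abs_nonneg u]) j) (abs_nonneg _)

private lemma one_add_abs_bound (c t : ℝ) (p : ℕ) :
    (1 + |t|) ^ p ≤ (1 + |c|) ^ p * (1 + |c - t|) ^ p := by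
  rw [← mul_pow]
  apply pow_le_pow_left₀ (by positivity)
  have htri : |t| ≤ |c| + |c - t| := by
    have h := abs_add_le c (t - c)
    simp only [add_sub_cancel] at h
    calc |t| ≤ |c| + |t - c| := h
      _ = |c| + |c - t| := by rw [abs_sub_comm]
  nlinarith [abs_nonneg c, abs_nonneg (c - t)]

private lemma integrable_growth_mul_psi (ψ : SchwartzMap ℝ ℝ) {g : ℝ → ℝ}
    (hg : AEStronglyMeasurable g volume) (D : ℝ) (p : ℕ)
    (hbd : ∀ t, |g t| ≤ D * (1 + |t|) ^ p) (c : ℝ) :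
    Integrable (fun t : ℝ => g t * ψ (c - t)) := by
  have hD : 0 ≤ D := le_trans (abs_nonneg (g 0)) (by simpa using hbd 0)
  have hb2 : Integrable
      (fun t : ℝ => D * (1 + |c|) ^ p * ((1 + |c - t|) ^ p * |ψ (c - t)|)) :=
    ((integrable_comp_sub (psi_base_int ψ p) c).const_mul _)
  refine hb2.mono' ?_ (Eventually.of_forall fun t => ?_)
  · exact hg.mul
      ((ψ.continuous.comp (continuous_const.sub continuous_id)).aestronglyMeasurable)
  · rw [Real.norm_eq_abs, abs_mul]
    calc |g t| * |ψ (c - t)|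
        ≤ D * (1 + |t|) ^ p * |ψ (c - t)| :=
          mul_le_mul_of_nonneg_right (hbd t) (abs_nonneg _)
      _ ≤ D * ((1 + |c|) ^ p * (1 + |c - t|) ^ p) * |ψ (c - t)| := by
          apply mul_le_mul_of_nonneg_right _ (abs_nonneg _)
          exact mul_le_mul_of_nonneg_left (one_add_abs_bound c t p) hD
      _ = D * (1 + |c|) ^ p * ((1 + |c - t|) ^ p * |ψ (c - t)|) := by ring

private lemma moment_translate (ψ : SchwartzMap ℝ ℝ)
    (hψ1 : (𝓕 fun t : ℝ => (ψ t : ℂ)) =ᶠ[nhds (0 : ℝ)] fun _ => 1)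
    (m : ℕ) (c : ℝ) : (∫ t : ℝ, t ^ m * ψ (c - t)) = c ^ m := by
  have h1 : (∫ t : ℝ, t ^ m * ψ (c - t)) = ∫ u : ℝ, (c - u) ^ m * ψ u := by
    have h := int_comp_sub (fun u => (c - u) ^ m * ψ u) c
    simpa [sub_sub_cancel] using h
  rw [h1]
  have h2 : (∫ u : ℝ, (c - u) ^ m * ψ u) = ∫ u : ℝ,
      ∑ i ∈ Finset.range (m + 1),
        ((-1 : ℝ) ^ (i + m) * c ^ i * (m.choose i)) * (u ^ (m - i) * ψ u) := by
    congr 1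
    funext u
    rw [sub_pow, Finset.sum_mul]
    apply Finset.sum_congr rfl
    intros i _
    ring
  rw [h2, integral_finset_sum _ (fun i _ => (integrable_pow_psi ψ (m - i)).const_mul _)]
  have h3 : ∀ i ∈ Finset.range (m + 1), i ≠ m →
      ((-1 : ℝ) ^ (i + m) * c ^ i * (m.choose i)) * (∫ u : ℝ, u ^ (m - i) * ψ u) = 0 := by
    intro i hi hne
    rw [psi_moment_pos ψ hψ1 (m - i) (by simp at hi; omega), mul_zero]
  calc (∑ i ∈ Finset.range (m + 1),
        ∫ u : ℝ, ((-1 : ℝ) ^ (i + m) * c ^ i * (m.choose i)) * (u ^ (m - i) * ψ u))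
      = ∑ i ∈ Finset.range (m + 1),
        ((-1 : ℝ) ^ (i + m) * c ^ i * (m.choose i)) * (∫ u : ℝ, u ^ (m - i) * ψ u) := by
        apply Finset.sum_congr rfl
        intro i _
        exact MeasureTheory.integral_const_mul _ _
    _ = ((-1 : ℝ) ^ (m + m) * c ^ m * (m.choose m)) * (∫ u : ℝ, u ^ (m - m) * ψ u) :=
        Finset.sum_eq_single m h3
          (fun h => absurd (Finset.self_mem_range_succ m) h)
    _ = c ^ m := by
        rw [Nat.sub_self, Nat.choose_self]
        have he : (∫ u : ℝ, u ^ 0 * ψ u) = 1 := by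
          simpa using psi_moment_zero ψ hψ1
        rw [he, Even.neg_one_pow ⟨m, rfl⟩]
        ring

set_option maxHeartbeats 2000000 in
/-- Lower bound for the Weyl remainder on a compact `n`-manifold with boundary whose
second heat-type coefficient `a₂ = C(∫_M 𝒦 + 2n ∫_{∂M} H)` is nonzero: given the
smoothed two-term Weyl expansion `∫ N(t) ψ(λ-t) dt = ∑_j a_j λ^{n-j} + O(λ^{-∞})`,
the remainder `R = N - a₀ λ^n - a₁ λ^{n-1}` satisfies
`(1/λ)∫_λ^{2λ} |R| ≫ λ^{n-2}`. -/
theorem weyl_remainder_lower_bound_higher_dim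
    (n : ℕ) (hn : 2 ≤ n)
    -- total scalar curvature of M and total mean curvature of ∂M:
    (scalarInt meanInt : ℝ)
    (hcurv : scalarInt + 2 * n * meanInt ≠ 0)
    (C : ℝ) (hC : C ≠ 0)
    -- the coefficients of the smoothed Weyl expansion, with a₂ given by the curvatures:
    (a : ℕ → ℝ) (ha2 : a 2 = C * (scalarInt + 2 * n * meanInt))
    -- the eigenvalue counting function (monotone, of polynomial growth):
    (N : ℝ → ℝ) (hNmono : Monotone N)
    (hNgrow : ∃ C' s : ℝ, 0 < C' ∧ 0 < s ∧ ∀ x : ℝ, |N x| ≤ C' * (1 + |x|) ^ s)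
    -- the test function: Schwartz, with compactly supported Fourier transform ≡ 1 near 0:
    (ψ : SchwartzMap ℝ ℝ)
    (hψc : HasCompactSupport (𝓕 fun t : ℝ => (ψ t : ℂ)))
    (hψ1 : (𝓕 fun t : ℝ => (ψ t : ℂ)) =ᶠ[nhds (0 : ℝ)] fun _ => 1)
    -- the smoothed Weyl expansion with O(λ^{-∞}) error:
    (hexp : ∀ K : ℕ,
      (fun lam : ℝ => (∫ t : ℝ, N t * ψ (lam - t)) -
          ∑ j ∈ Finset.range (K + 1), a j * lam ^ ((n : ℝ) - j))
        =O[atTop] fun lam : ℝ => lam ^ ((n : ℝ) - K - 1))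
    -- the Weyl remainder:
    (R : ℝ → ℝ)
    (hRdef : ∀ lam : ℝ, R lam = N lam - a 0 * lam ^ (n : ℝ) - a 1 * lam ^ ((n : ℝ) - 1)) :
    ∃ c X₀ : ℝ, 0 < c ∧ 0 < X₀ ∧
      ∀ lam : ℝ, X₀ < lam →
        c * lam ^ ((n : ℝ) - 2) ≤ (1 / lam) * ∫ τ in lam..(2 * lam), |R τ| := by
  obtain ⟨C', s, hC'pos, hspos, hNbd⟩ := hNgrow
  have ha2ne : a 2 ≠ 0 := by rw [ha2]; exact mul_ne_zero hC hcurv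
  set α : ℝ := |a 2| with hα
  have hαpos : 0 < α := abs_pos.2 ha2ne
  set e : ℝ := (n : ℝ) - 2 with he_def
  have hn2 : (2 : ℝ) ≤ (n : ℝ) := by exact_mod_cast hn
  have he0 : 0 ≤ e := by simp only [he_def]; linarith
  set p0 : ℕ := ⌈s⌉₊ + n with hp0_def
  have hs_le : s ≤ (p0 : ℝ) := by
    have h1 : s ≤ (⌈s⌉₊ : ℝ) := Nat.le_ceil s
    have h2 : ((⌈s⌉₊ : ℕ) : ℝ) ≤ (p0 : ℝ) := by exact_mod_cast Nat.le_add_right _ n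
    linarith
  have hn_le : n ≤ p0 := Nat.le_add_left n _
  have hRalt : ∀ t : ℝ, R t = N t - a 0 * t ^ n - a 1 * t ^ (n - 1) := by
    intro t
    rw [hRdef t]
    have h1 : t ^ ((n : ℝ)) = t ^ n := Real.rpow_natCast t n
    have h2 : t ^ ((n : ℝ) - 1) = t ^ (n - 1) := by
      rw [show ((n : ℝ) - 1) = ((n - 1 : ℕ) : ℝ) by
        rw [Nat.cast_sub (by omega : 1 ≤ n)]; norm_num]
      exact Real.rpow_natCast t (n - 1)
    rw [h1, h2]
  have hNmeas : Measurable N := hNmono.measurable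
  have hRmeas : Measurable R := by
    have h : R = fun t => N t - a 0 * t ^ n - a 1 * t ^ (n - 1) := funext hRalt
    rw [h]
    exact (hNmeas.sub (measurable_const.mul (measurable_id.pow_const n))).sub
      (measurable_const.mul (measurable_id.pow_const (n - 1)))
  set D : ℝ := C' + |a 0| + |a 1| with hD_def
  have hDpos : 0 < D := by positivity
  have h_one_le : ∀ t : ℝ, (1 : ℝ) ≤ 1 + |t| := fun t => by linarith [abs_nonneg t]
  have hpow_le : ∀ (t : ℝ) (m : ℕ), m ≤ p0 → |t| ^ m ≤ (1 + |t|) ^ p0 := by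
    intro t m hm
    calc |t| ^ m ≤ (1 + |t|) ^ m :=
          pow_le_pow_left₀ (abs_nonneg t) (by linarith [abs_nonneg t]) m
      _ ≤ (1 + |t|) ^ p0 := pow_le_pow_right₀ (h_one_le t) hm
  have hNbd' : ∀ t : ℝ, |N t| ≤ C' * (1 + |t|) ^ p0 := by
    intro t
    refine (hNbd t).trans ?_
    apply mul_le_mul_of_nonneg_left _ hC'pos.le
    calc (1 + |t|) ^ s ≤ (1 + |t|) ^ (p0 : ℝ) :=
          Real.rpow_le_rpow_of_exponent_le (h_one_le t) hs_le
      _ = (1 + |t|) ^ p0 := Real.rpow_natCast _ p0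
  have hRbd : ∀ t : ℝ, |R t| ≤ D * (1 + |t|) ^ p0 := by
    intro t
    rw [hRalt t]
    have h2 : |a 0 * t ^ n| ≤ |a 0| * (1 + |t|) ^ p0 := by
      rw [abs_mul, abs_pow]
      exact mul_le_mul_of_nonneg_left (hpow_le t n hn_le) (abs_nonneg _)
    have h3 : |a 1 * t ^ (n - 1)| ≤ |a 1| * (1 + |t|) ^ p0 := by
      rw [abs_mul, abs_pow]
      exact mul_le_mul_of_nonneg_left (hpow_le t (n - 1) (by omega)) (abs_nonneg _)
    calc |N t - a 0 * t ^ n - a 1 * t ^ (n - 1)|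
        ≤ |N t - a 0 * t ^ n| + |a 1 * t ^ (n - 1)| := abs_sub _ _
      _ ≤ |N t| + |a 0 * t ^ n| + |a 1 * t ^ (n - 1)| := by
          linarith [abs_sub (N t) (a 0 * t ^ n)]
      _ ≤ C' * (1 + |t|) ^ p0 + |a 0| * (1 + |t|) ^ p0 + |a 1| * (1 + |t|) ^ p0 := by
          gcongr
          exact hNbd' t
      _ = D * (1 + |t|) ^ p0 := by rw [hD_def]; ring
  -- integrability
  have hPint : ∀ (m : ℕ), m ≤ p0 → ∀ c : ℝ, Integrable (fun t : ℝ => t ^ m * ψ (c - t)) := by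
    intro m hm c
    refine integrable_growth_mul_psi ψ
      (measurable_id.pow_const m).aestronglyMeasurable 1 p0 (fun t => ?_) c
    rw [one_mul, abs_pow]
    exact hpow_le t m hm
  have hNint : ∀ c : ℝ, Integrable (fun t : ℝ => N t * ψ (c - t)) := fun c =>
    integrable_growth_mul_psi ψ hNmeas.aestronglyMeasurable C' p0 hNbd' c
  have hRint : ∀ c : ℝ, Integrable (fun t : ℝ => R t * ψ (c - t)) := fun c =>
    integrable_growth_mul_psi ψ hRmeas.aestronglyMeasurable D p0 hRbd c
  -- G and its expansion
  set G : ℝ → ℝ := fun c => ∫ t : ℝ, R t * ψ (c - t) with hG_def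
  have hGeq : ∀ c : ℝ,
      G c = (∫ t : ℝ, N t * ψ (c - t)) - a 0 * c ^ n - a 1 * c ^ (n - 1) := by
    intro c
    have hfun : (fun t : ℝ => R t * ψ (c - t)) = fun t : ℝ =>
        (N t * ψ (c - t) - a 0 * (t ^ n * ψ (c - t))) - a 1 * (t ^ (n - 1) * ψ (c - t)) := by
      funext t; rw [hRalt t]; ring
    have h1 : G c = ∫ t : ℝ,
        ((N t * ψ (c - t) - a 0 * (t ^ n * ψ (c - t))) - a 1 * (t ^ (n - 1) * ψ (c - t))) := by
      rw [hG_def]; exact congrArg _ hfun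
    have hInt2 : Integrable (fun t : ℝ => a 0 * (t ^ n * ψ (c - t))) :=
      (hPint n hn_le c).const_mul _
    have hInt3 : Integrable (fun t : ℝ => a 1 * (t ^ (n - 1) * ψ (c - t))) :=
      (hPint (n - 1) (by omega) c).const_mul _
    have hInt1 : Integrable (fun t : ℝ => N t * ψ (c - t) - a 0 * (t ^ n * ψ (c - t))) :=
      (hNint c).sub hInt2
    rw [h1, integral_sub hInt1 hInt3, integral_sub (hNint c) hInt2,
      MeasureTheory.integral_const_mul, MeasureTheory.integral_const_mul,
      moment_translate ψ hψ1, moment_translate ψ hψ1]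
  -- asymptotics
  obtain ⟨CB, hCB⟩ := (hexp 2).bound
  rw [eventually_atTop] at hCB
  obtain ⟨M₁, hM₁⟩ := hCB
  set CB' : ℝ := max CB 0 with hCB'_def
  have hCB'0 : 0 ≤ CB' := le_max_right _ _
  have hGlow : ∀ μ : ℝ, M₁ ≤ μ → 1 ≤ μ → 2 * CB' / α ≤ μ → (α / 2) * μ ^ e ≤ |G μ| := by
    intro μ hμM hμ1 hμCB
    have hμpos : 0 < μ := by linarith
    have hb := hM₁ μ hμM
    have hsum : (∑ j ∈ Finset.range (2 + 1), a j * μ ^ ((n : ℝ) - (j : ℕ)))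
        = a 0 * μ ^ n + a 1 * μ ^ (n - 1) + a 2 * μ ^ e := by
      rw [Finset.sum_range_succ, Finset.sum_range_succ, Finset.sum_range_succ,
        Finset.sum_range_zero]
      have e0 : μ ^ ((n : ℝ) - ((0 : ℕ) : ℝ)) = μ ^ n := by
        norm_num [Real.rpow_natCast]
      have e1 : μ ^ ((n : ℝ) - ((1 : ℕ) : ℝ)) = μ ^ (n - 1) := by
        rw [Nat.cast_one, show ((n : ℝ) - 1) = ((n - 1 : ℕ) : ℝ) from by
          rw [Nat.cast_sub (by omega : 1 ≤ n)]; norm_num]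
        exact Real.rpow_natCast μ (n - 1)
      have e2 : μ ^ ((n : ℝ) - ((2 : ℕ) : ℝ)) = μ ^ e := by norm_num [he_def]
      rw [e0, e1, e2]; ring
    have hdiff : G μ - a 2 * μ ^ e
        = (∫ t : ℝ, N t * ψ (μ - t)) - ∑ j ∈ Finset.range (2 + 1), a j * μ ^ ((n : ℝ) - (j : ℕ)) := by
      rw [hGeq μ, hsum]; ring
    have hnorm3 : ‖μ ^ ((n : ℝ) - (2 : ℕ) - 1)‖ = μ ^ e / μ := by
      rw [Real.norm_eq_abs, abs_of_pos (Real.rpow_pos_of_pos hμpos _),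
        show (n : ℝ) - ((2 : ℕ) : ℝ) - 1 = e - 1 from by rw [he_def]; norm_num,
        Real.rpow_sub hμpos, Real.rpow_one]
    have hb2 : |G μ - a 2 * μ ^ e| ≤ CB' * (μ ^ e / μ) := by
      rw [hdiff]
      have := hb
      rw [Real.norm_eq_abs] at this
      calc |(∫ t : ℝ, N t * ψ (μ - t)) - ∑ j ∈ Finset.range (2 + 1), a j * μ ^ ((n : ℝ) - (j : ℕ))|
          ≤ CB * ‖μ ^ ((n : ℝ) - (2 : ℕ) - 1)‖ := this
        _ = CB * (μ ^ e / μ) := by rw [hnorm3]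
        _ ≤ CB' * (μ ^ e / μ) := by
            apply mul_le_mul_of_nonneg_right (le_max_left _ _)
            positivity
    have hsmall : CB' * (μ ^ e / μ) ≤ (α / 2) * μ ^ e := by
      have hrpos : 0 < μ ^ e := Real.rpow_pos_of_pos hμpos e
      have h1 : CB' ≤ (α / 2) * μ := by
        have h2 : 2 * CB' ≤ α * μ := by
          have h := (div_le_iff₀ hαpos).1 hμCB
          linarith
        linarith
      rw [mul_div_assoc', div_le_iff₀ hμpos]
      calc CB' * μ ^ e ≤ ((α / 2) * μ) * μ ^ e := by
            exact mul_le_mul_of_nonneg_right h1 hrpos.le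
        _ = (α / 2) * μ ^ e * μ := by ring
    have habs2 : |a 2 * μ ^ e| = α * μ ^ e := by
      rw [abs_mul, abs_of_pos (Real.rpow_pos_of_pos hμpos e)]
    have htri : α * μ ^ e - |G μ - a 2 * μ ^ e| ≤ |G μ| := by
      have h := abs_sub_abs_le_abs_sub (a 2 * μ ^ e) (G μ)
      rw [habs2, abs_sub_comm] at h
      linarith
    have hrpos : 0 < μ ^ e := Real.rpow_pos_of_pos hμpos e
    nlinarith [hb2, hsmall, htri]
  -- decay constants
  obtain ⟨Cd0, hCd0, hψbd0⟩ := psi_decay ψ 0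
  have hψsup : ∀ u : ℝ, |ψ u| ≤ Cd0 := by
    intro u
    have h1 := hψbd0 u
    have h2 : (1 + u ^ 2)⁻¹ ≤ 1 := by
      rw [inv_le_one_iff₀]
      right; nlinarith [sq_nonneg u]
    nlinarith [abs_nonneg (ψ u)]
  obtain ⟨Cd1, hCd1, hψbd1⟩ := psi_decay ψ (2 * p0 + 1)
  set Cπ : ℝ := ∫ u : ℝ, (1 + u ^ 2)⁻¹ with hCπ_def
  have hCπ0 : 0 ≤ Cπ := integral_nonneg fun u => by positivity
  set L : ℝ := ∫ u : ℝ, |ψ u| with hL_def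
  have hL1 : 1 ≤ L := by
    have h := norm_integral_le_integral_norm (μ := (volume : Measure ℝ)) (f := fun t : ℝ => ψ t)
    rw [psi_moment_zero ψ hψ1] at h
    simpa [Real.norm_eq_abs] using h
  have hLpos : 0 < L := lt_of_lt_of_le one_pos hL1
  set K1 : ℝ := D * 3 ^ p0 * Cd1 * 4 ^ (p0 + 1) * Cπ with hK1_def
  have hK1nn : 0 ≤ K1 := by positivity
  refine ⟨α / (8 * L), max (max M₁ 1) (max (2 * CB' / α + 1) (4 * K1 / α + 1)),
    by positivity, lt_of_lt_of_le one_pos ((le_max_right M₁ 1).trans (le_max_left _ _)), ?_⟩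
  intro lam hlam
  have hlam1 : 1 < lam := lt_of_le_of_lt ((le_max_right M₁ 1).trans (le_max_left _ _)) hlam
  have hlampos : 0 < lam := by linarith
  have hlamM₁ : M₁ ≤ lam := le_of_lt (lt_of_le_of_lt ((le_max_left M₁ 1).trans (le_max_left _ _)) hlam)
  have hlamCB : 2 * CB' / α + 1 ≤ lam :=
    le_of_lt (lt_of_le_of_lt ((le_max_left _ _).trans (le_max_right _ _)) hlam)
  have hlamK1 : 4 * K1 / α + 1 ≤ lam :=
    le_of_lt (lt_of_le_of_lt ((le_max_right _ _).trans (le_max_right _ _)) hlam)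
  set J : Set ℝ := Set.Icc lam (2 * lam) with hJ_def
  set I' : Set ℝ := Set.Icc (5 / 4 * lam) (7 / 4 * lam) with hI'_def
  -- tail bound
  have htail : ∀ μ ∈ I', (∫ t in Jᶜ, |R t * ψ (μ - t)|) ≤ K1 / lam := by
    intro μ hμ
    obtain ⟨hμl, hμr⟩ := Set.mem_Icc.1 hμ
    have hμpos : 0 < μ := by linarith
    have hpt : ∀ t ∈ Jᶜ, |R t * ψ (μ - t)|
        ≤ (D * 3 ^ p0 * Cd1 * 4 ^ (p0 + 1) / lam) * (1 + (μ - t) ^ 2)⁻¹ := by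
      intro t ht
      have hdist : lam / 4 ≤ |μ - t| := by
        rw [hJ_def] at ht
        simp only [Set.mem_compl_iff, Set.mem_Icc, not_and_or, not_le] at ht
        rcases ht with h | h
        · exact le_trans (by linarith) (le_abs_self (μ - t))
        · exact le_trans (by linarith) (neg_le_abs (μ - t))
      have hd1 : lam / 4 ≤ 1 + |μ - t| := by linarith [abs_nonneg (μ - t)]
      have hA : |R t| ≤ D * (1 + |μ|) ^ p0 * (1 + |μ - t|) ^ p0 := by
        calc |R t| ≤ D * (1 + |t|) ^ p0 := hRbd t
          _ ≤ D * ((1 + |μ|) ^ p0 * (1 + |μ - t|) ^ p0) :=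
              mul_le_mul_of_nonneg_left (one_add_abs_bound μ t p0) hDpos.le
          _ = D * (1 + |μ|) ^ p0 * (1 + |μ - t|) ^ p0 := by ring
      have hB : (1 + |μ - t|) ^ p0 * |ψ (μ - t)|
          ≤ Cd1 * (1 + (μ - t) ^ 2)⁻¹ / (lam / 4) ^ (p0 + 1) := by
        have hkey : (1 + |μ - t|) ^ (p0 + 1) * ((1 + |μ - t|) ^ p0 * |ψ (μ - t)|)
            ≤ Cd1 * (1 + (μ - t) ^ 2)⁻¹ := by
          have h := hψbd1 (μ - t)
          calc (1 + |μ - t|) ^ (p0 + 1) * ((1 + |μ - t|) ^ p0 * |ψ (μ - t)|)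
              = (1 + |μ - t|) ^ (2 * p0 + 1) * |ψ (μ - t)| := by
                rw [← mul_assoc, ← pow_add]
                congr 2
                omega
            _ ≤ Cd1 * (1 + (μ - t) ^ 2)⁻¹ := h
        have hppos : (0:ℝ) < (lam / 4) ^ (p0 + 1) := by positivity
        have hppos2 : (0:ℝ) < (1 + |μ - t|) ^ (p0 + 1) := by positivity
        rw [le_div_iff₀ hppos]
        calc (1 + |μ - t|) ^ p0 * |ψ (μ - t)| * (lam / 4) ^ (p0 + 1)
            ≤ (1 + |μ - t|) ^ p0 * |ψ (μ - t)| * (1 + |μ - t|) ^ (p0 + 1) := by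
              apply mul_le_mul_of_nonneg_left _ (by positivity)
              exact pow_le_pow_left₀ (by positivity) hd1 _
          _ = (1 + |μ - t|) ^ (p0 + 1) * ((1 + |μ - t|) ^ p0 * |ψ (μ - t)|) := by ring
          _ ≤ Cd1 * (1 + (μ - t) ^ 2)⁻¹ := hkey
      have hμbd : (1 + |μ|) ^ p0 ≤ (3 * lam) ^ p0 := by
        apply pow_le_pow_left₀ (by positivity)
        rw [abs_of_pos hμpos]
        linarith
      have hcomb : |R t * ψ (μ - t)|
          ≤ D * (3 * lam) ^ p0 * (Cd1 * (1 + (μ - t) ^ 2)⁻¹ / (lam / 4) ^ (p0 + 1)) := by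
        rw [abs_mul]
        calc |R t| * |ψ (μ - t)|
            ≤ (D * (1 + |μ|) ^ p0 * (1 + |μ - t|) ^ p0) * |ψ (μ - t)| :=
              mul_le_mul_of_nonneg_right hA (abs_nonneg _)
          _ = (D * (1 + |μ|) ^ p0) * ((1 + |μ - t|) ^ p0 * |ψ (μ - t)|) := by ring
          _ ≤ (D * (1 + |μ|) ^ p0) * (Cd1 * (1 + (μ - t) ^ 2)⁻¹ / (lam / 4) ^ (p0 + 1)) := by
              apply mul_le_mul_of_nonneg_left hB (by positivity)
          _ ≤ (D * (3 * lam) ^ p0) * (Cd1 * (1 + (μ - t) ^ 2)⁻¹ / (lam / 4) ^ (p0 + 1)) := by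
              apply mul_le_mul_of_nonneg_right _ (by positivity)
              exact mul_le_mul_of_nonneg_left hμbd hDpos.le
      refine hcomb.trans (le_of_eq ?_)
      rw [mul_pow, div_pow]
      field_simp
      ring
    have hgint : Integrable (fun t : ℝ =>
        (D * 3 ^ p0 * Cd1 * 4 ^ (p0 + 1) / lam) * (1 + (μ - t) ^ 2)⁻¹) := by
      have h := (integrable_comp_sub (f := fun u : ℝ => (1 + u ^ 2)⁻¹)
        integrable_inv_one_add_sq μ).const_mul (D * 3 ^ p0 * Cd1 * 4 ^ (p0 + 1) / lam)
      exact h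
    calc (∫ t in Jᶜ, |R t * ψ (μ - t)|)
        ≤ ∫ t in Jᶜ, (D * 3 ^ p0 * Cd1 * 4 ^ (p0 + 1) / lam) * (1 + (μ - t) ^ 2)⁻¹ :=
          setIntegral_mono_on ((hRint μ).abs.integrableOn) hgint.integrableOn
            measurableSet_Icc.compl hpt
      _ ≤ ∫ t : ℝ, (D * 3 ^ p0 * Cd1 * 4 ^ (p0 + 1) / lam) * (1 + (μ - t) ^ 2)⁻¹ :=
          setIntegral_le_integral hgint (Eventually.of_forall fun t => by positivity)
      _ = (D * 3 ^ p0 * Cd1 * 4 ^ (p0 + 1) / lam) * ∫ t : ℝ, (1 + (μ - t) ^ 2)⁻¹ :=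
          MeasureTheory.integral_const_mul _ _
      _ = K1 / lam := by
          have h : (∫ t : ℝ, (1 + (μ - t) ^ 2)⁻¹) = Cπ :=
            int_comp_sub (fun u : ℝ => (1 + u ^ 2)⁻¹) μ
          rw [h, hK1_def]
          ring
  -- per-μ lower bound on J-integral
  have hmain : ∀ μ ∈ I', (α / 4) * lam ^ e ≤ ∫ t in J, |R t * ψ (μ - t)| := by
    intro μ hμ
    obtain ⟨hμl, hμr⟩ := Set.mem_Icc.1 hμ
    have hμlam : lam ≤ μ := by linarith
    have hGμ : (α / 2) * μ ^ e ≤ |G μ| :=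
      hGlow μ (by linarith) (by linarith) (by linarith)
    have hsplit : (∫ t in J, R t * ψ (μ - t)) + (∫ t in Jᶜ, R t * ψ (μ - t)) = G μ :=
      integral_add_compl measurableSet_Icc (hRint μ)
    have h2 : |∫ t in Jᶜ, R t * ψ (μ - t)| ≤ ∫ t in Jᶜ, |R t * ψ (μ - t)| := by
      have h := norm_integral_le_integral_norm
        (μ := volume.restrict Jᶜ) (f := fun t : ℝ => R t * ψ (μ - t))
      simpa only [Real.norm_eq_abs] using h
    have h3 : |∫ t in J, R t * ψ (μ - t)| ≤ ∫ t in J, |R t * ψ (μ - t)| := by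
      have h := norm_integral_le_integral_norm
        (μ := volume.restrict J) (f := fun t : ℝ => R t * ψ (μ - t))
      simpa only [Real.norm_eq_abs] using h
    have h4 := htail μ hμ
    have hK1lam : K1 / lam ≤ α / 4 := by
      rw [div_le_iff₀ hlampos]
      have h5 : 4 * K1 / α < lam := by linarith
      have h6 : 4 * K1 < α * lam := by
        rw [div_lt_iff₀ hαpos] at h5
        linarith [h5]
      linarith
    have hμe : lam ^ e ≤ μ ^ e := Real.rpow_le_rpow hlampos.le hμlam he0
    have hle1 : 1 ≤ lam ^ e := by
      calc (1 : ℝ) = 1 ^ e := (Real.one_rpow e).symm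
        _ ≤ lam ^ e := Real.rpow_le_rpow zero_le_one hlam1.le he0
    have htri2 : |G μ| ≤ |∫ t in J, R t * ψ (μ - t)| + |∫ t in Jᶜ, R t * ψ (μ - t)| := by
      rw [← hsplit]
      exact abs_add_le _ _
    nlinarith [hαpos.le]
  -- product integrability
  have hmeasg : AEStronglyMeasurable (Function.uncurry fun μ t : ℝ => |R t * ψ (μ - t)|)
      ((volume.restrict I').prod (volume.restrict J)) := by
    have hm : Measurable fun z : ℝ × ℝ => |R z.2 * ψ (z.1 - z.2)| :=
      ((hRmeas.comp measurable_snd).mul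
        (ψ.continuous.measurable.comp (measurable_fst.sub measurable_snd))).abs
    exact hm.aestronglyMeasurable
  haveI hfin : IsFiniteMeasure ((volume.restrict I').prod (volume.restrict J)) := by
    constructor
    rw [← Set.univ_prod_univ, Measure.prod_prod, Measure.restrict_apply_univ,
      Measure.restrict_apply_univ, hI'_def, hJ_def, Real.volume_Icc, Real.volume_Icc]
    exact ENNReal.mul_lt_top ENNReal.ofReal_lt_top ENNReal.ofReal_lt_top
  have hprod : Integrable (Function.uncurry fun μ t : ℝ => |R t * ψ (μ - t)|)
      ((volume.restrict I').prod (volume.restrict J)) := by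
    refine (integrable_const (D * (1 + 2 * lam) ^ p0 * Cd0)).mono' hmeasg ?_
    rw [Measure.prod_restrict]
    refine (ae_restrict_iff' (measurableSet_Icc.prod measurableSet_Icc)).2
      (Eventually.of_forall fun z hz => ?_)
    obtain ⟨hz1, hz2⟩ := Set.mem_prod.1 hz
    obtain ⟨ht1, ht2⟩ := Set.mem_Icc.1 hz2
    have habs : |z.2| ≤ 2 * lam := by
      rw [abs_of_pos (by linarith)]
      exact ht2
    simp only [Function.uncurry, Real.norm_eq_abs, abs_abs, abs_mul]
    calc |R z.2| * |ψ (z.1 - z.2)| ≤ (D * (1 + |z.2|) ^ p0) * Cd0 :=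
          mul_le_mul (hRbd z.2) (hψsup _) (abs_nonneg _) (by positivity)
      _ ≤ D * (1 + 2 * lam) ^ p0 * Cd0 := by
          apply mul_le_mul_of_nonneg_right _ hCd0
          apply mul_le_mul_of_nonneg_left _ hDpos.le
          exact pow_le_pow_left₀ (by positivity) (by linarith) _
  have hswap : (∫ μ in I', ∫ t in J, |R t * ψ (μ - t)|)
      = ∫ t in J, ∫ μ in I', |R t * ψ (μ - t)| :=
    integral_integral_swap hprod
  have hFint : IntegrableOn (fun μ : ℝ => ∫ t in J, |R t * ψ (μ - t)|) I' volume :=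
    hprod.integral_prod_left
  have hvol : (volume I').toReal = lam / 2 := by
    rw [hI'_def, Real.volume_Icc, ENNReal.toReal_ofReal (by linarith)]
    ring
  have hlower : (α / 4) * lam ^ e * (lam / 2) ≤ ∫ μ in I', ∫ t in J, |R t * ψ (μ - t)| := by
    have h := setIntegral_ge_of_const_le_real (μ := (volume : Measure ℝ)) (s := I')
      measurableSet_Icc (by rw [hI'_def, Real.volume_Icc]; exact ENNReal.ofReal_ne_top)
      hmain hFint
    rw [measureReal_def, hvol] at h
    exact h
  -- upper bound after swapping
  have hRJbd : ∀ t ∈ J, |R t| ≤ D * (1 + 2 * lam) ^ p0 := by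
    intro t ht
    obtain ⟨ht1, ht2⟩ := Set.mem_Icc.1 ht
    calc |R t| ≤ D * (1 + |t|) ^ p0 := hRbd t
      _ ≤ D * (1 + 2 * lam) ^ p0 := by
          apply mul_le_mul_of_nonneg_left _ hDpos.le
          apply pow_le_pow_left₀ (by positivity)
          rw [abs_of_pos (by linarith)]
          linarith
  have hRLint : IntegrableOn (fun t : ℝ => |R t| * L) J volume := by
    refine Integrable.mono' (g := fun _ => D * (1 + 2 * lam) ^ p0 * L)
      ?_ ((hRmeas.abs.mul measurable_const).aestronglyMeasurable) ?_
    · refine integrable_const_iff.2 (Or.inr ?_)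
      exact isFiniteMeasure_restrict.2 (by rw [hJ_def, Real.volume_Icc]; exact ENNReal.ofReal_ne_top)
    · refine (ae_restrict_iff' measurableSet_Icc).2 (Eventually.of_forall fun t ht => ?_)
      rw [Real.norm_eq_abs, abs_of_nonneg (by positivity)]
      exact mul_le_mul_of_nonneg_right (hRJbd t ht) hLpos.le
  have hupper : (∫ t in J, ∫ μ in I', |R t * ψ (μ - t)|) ≤ ∫ t in J, |R t| * L := by
    refine setIntegral_mono_on hprod.integral_prod_right hRLint measurableSet_Icc ?_
    intro t _
    have h1 : (∫ μ in I', |R t * ψ (μ - t)|) = |R t| * ∫ μ in I', |ψ (μ - t)| := by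
      rw [← MeasureTheory.integral_const_mul]
      congr 1
      funext μ
      rw [abs_mul]
    rw [h1]
    apply mul_le_mul_of_nonneg_left _ (abs_nonneg _)
    have hint2 : Integrable (fun μ : ℝ => |ψ (μ - t)|) := by
      have h := (ψ.integrable (μ := (volume : Measure ℝ))).abs.comp_add_right (-t)
      simpa [sub_eq_add_neg] using h
    calc (∫ μ in I', |ψ (μ - t)|)
        ≤ ∫ μ : ℝ, |ψ (μ - t)| :=
          setIntegral_le_integral hint2 (Eventually.of_forall fun μ => abs_nonneg _)
      _ = L := by
          have h : (∫ μ : ℝ, |ψ (μ - t)|) = ∫ u : ℝ, |ψ u| := by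
            simpa [sub_eq_add_neg] using
              integral_add_right_eq_self (fun u : ℝ => |ψ u|) (-t)
          rw [h, hL_def]
  have hpull : (∫ t in J, |R t| * L) = (∫ t in J, |R t|) * L :=
    MeasureTheory.integral_mul_const _ _
  have hintervaleq : (∫ τ in lam..(2 * lam), |R τ|) = ∫ t in J, |R t| := by
    rw [intervalIntegral.integral_of_le (by linarith), hJ_def]
    exact (MeasureTheory.integral_Icc_eq_integral_Ioc).symm
  have hSineq : α / 8 * lam ^ e * lam ≤ (∫ t in J, |R t|) * L := by
    have h : (α / 4) * lam ^ e * (lam / 2) = α / 8 * lam ^ e * lam := by ring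
    rw [← hpull]
    linarith [hlower, hupper, hswap.le, hswap.ge]
  rw [hintervaleq]
  have h1 : (α / 8 * lam ^ e * lam) / L ≤ ∫ t in J, |R t| := by
    rw [div_le_iff₀ hLpos]
    exact hSineq
  have h2 : α / (8 * L) * lam ^ e = (1 / lam) * ((α / 8 * lam ^ e * lam) / L) := by
    field_simp
  rw [h2]
  exact mul_le_mul_of_nonneg_left h1 (by positivity)
end

section
/- Suppose R : ℝ → ℝ is locally integrable with polynomial growth and satisfies ∫_{-∞}^∞ R(t) ψ(x − t) dt = a x^{n−2} + O(x^{n−3}) as x → ∞ for some Schwartz function ψ and some constant a ≠ 0, with n ≥ 3. Then (1/X)∫_X^{2X} |R(t)| dt ≥ C X^{n−2} for some C > 0 and all sufficiently large X. -/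
set_option maxHeartbeats 1000000


open MeasureTheory Real Filter Asymptotics

private lemma aux_one_add_pow_le (p : ℕ) (a : ℝ) (ha : 0 ≤ a) :
    (1 + a) ^ p ≤ 2 ^ p * (1 + a ^ p) := by
  rcases le_total a 1 with h | h
  · have h1 : (1 + a) ^ p ≤ 2 ^ p := by
      apply pow_le_pow_left₀ (by linarith) (by linarith)
    have h2 : (0:ℝ) ≤ a ^ p := by positivity
    nlinarith [pow_pos (show (0:ℝ) < 2 by norm_num) p]
  · have h1 : (1 + a) ^ p ≤ (2 * a) ^ p := by
      apply pow_le_pow_left₀ (by linarith) (by linarith)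
    have h2 : (2 * a) ^ p = 2 ^ p * a ^ p := mul_pow 2 a p
    have h3 : (0:ℝ) ≤ 2 ^ p := by positivity
    nlinarith [pow_nonneg ha p]

private lemma aux_schwartz_core (ψ : SchwartzMap ℝ ℝ) (q : ℕ) :
    ∃ D : ℝ, 0 < D ∧ ∀ u : ℝ,
      (1 + |u|) ^ q * ((1 + |u|) ^ q * ((1 + u ^ 2) * |ψ u|)) ≤ D := by
  obtain ⟨D1, hD1, h1⟩ := ψ.decay (2 * q + 2) 0
  obtain ⟨D0, hD0, h0⟩ := ψ.decay 0 0
  refine ⟨2 ^ (2 * q + 2) * (D0 + D1), by positivity, fun u => ?_⟩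
  have hnorm : ∀ k : ℕ, ‖u‖ ^ k * ‖iteratedFDeriv ℝ 0 (⇑ψ) u‖ = |u| ^ k * |ψ u| := by
    intro k
    rw [norm_iteratedFDeriv_zero]
    simp [Real.norm_eq_abs]
  have h1' : |u| ^ (2 * q + 2) * |ψ u| ≤ D1 := by
    have := h1 u; rwa [hnorm] at this
  have h0' : |ψ u| ≤ D0 := by
    have := h0 u; rw [hnorm 0] at this; simpa using this
  have key : (1 + |u|) ^ (2 * q + 2) * |ψ u| ≤ 2 ^ (2 * q + 2) * (D0 + D1) := by
    have hp := aux_one_add_pow_le (2 * q + 2) |u| (abs_nonneg u)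
    have h2 : (0:ℝ) ≤ (2:ℝ) ^ (2 * q + 2) := by positivity
    calc (1 + |u|) ^ (2 * q + 2) * |ψ u|
        ≤ (2 ^ (2 * q + 2) * (1 + |u| ^ (2 * q + 2))) * |ψ u| :=
          mul_le_mul_of_nonneg_right hp (abs_nonneg _)
      _ = 2 ^ (2 * q + 2) * (|ψ u| + |u| ^ (2 * q + 2) * |ψ u|) := by ring
      _ ≤ 2 ^ (2 * q + 2) * (D0 + D1) := by
          apply mul_le_mul_of_nonneg_left _ h2
          linarith
  have hsq : 1 + u ^ 2 ≤ (1 + |u|) ^ 2 := by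
    have := abs_nonneg u
    nlinarith [sq_abs u]
  calc (1 + |u|) ^ q * ((1 + |u|) ^ q * ((1 + u ^ 2) * |ψ u|))
      ≤ (1 + |u|) ^ q * ((1 + |u|) ^ q * ((1 + |u|) ^ 2 * |ψ u|)) := by
        have h1u : (0:ℝ) ≤ 1 + |u| := by positivity
        gcongr
    _ = (1 + |u|) ^ (2 * q + 2) * |ψ u| := by ring
    _ ≤ 2 ^ (2 * q + 2) * (D0 + D1) := key

/-- If the smoothed remainder has asymptotics `a x^{n-2} + O(x^{n-3})` with `a ≠ 0`,
then the remainder is at least of order `x^{n-2}` on average. -/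
theorem averaged_lower_bound_from_asymptotics
    (R : ℝ → ℝ) (hR : LocallyIntegrable R volume)
    (hgrowth : ∃ C s : ℝ, 0 < C ∧ 0 < s ∧ ∀ t : ℝ, |R t| ≤ C * (1 + |t|) ^ s)
    (ψ : SchwartzMap ℝ ℝ) (a : ℝ) (ha : a ≠ 0) (n : ℕ) (hn : 3 ≤ n)
    (hasymp : (fun x : ℝ => (∫ t : ℝ, R t * ψ (x - t)) - a * x ^ ((n : ℝ) - 2))
      =O[atTop] fun x : ℝ => x ^ ((n : ℝ) - 3)) :
    ∃ C X₀ : ℝ, 0 < C ∧ 0 < X₀ ∧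
      ∀ X : ℝ, X₀ < X →
        C * X ^ ((n : ℝ) - 2) ≤ (1 / X) * ∫ t in X..(2 * X), |R t| := by
  obtain ⟨C, s, hC, hs, hRb⟩ := hgrowth
  set q : ℕ := ⌈s⌉₊ with hqdef
  have hsq : s ≤ (q : ℝ) := Nat.le_ceil s
  obtain ⟨D, hD, hcore⟩ := aux_schwartz_core ψ q
  have ha0 : (0:ℝ) < |a| := abs_pos.mpr ha
  have hone : ∀ u : ℝ, (1:ℝ) ≤ 1 + |u| := fun u => le_add_of_nonneg_right (abs_nonneg u)
  have hA1 : ∀ u : ℝ, (1:ℝ) ≤ (1 + |u|) ^ q := fun u => one_le_pow₀ (hone u)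
  -- rpow vs pow comparison
  have hqpow : ∀ u : ℝ, (1 + |u|) ^ s ≤ (1 + |u|) ^ (q : ℕ) := by
    intro u
    rw [← Real.rpow_natCast (1 + |u|) q]
    exact Real.rpow_le_rpow_of_exponent_le (hone u) hsq
  -- global decay bound
  have hb1 : ∀ u : ℝ, (1 + |u|) ^ s * |ψ u| ≤ D * (1 + u ^ 2)⁻¹ := by
    intro u
    have hpos : (0:ℝ) < 1 + u ^ 2 := by positivity
    rw [← div_eq_mul_inv, le_div_iff₀ hpos]
    calc (1 + |u|) ^ s * |ψ u| * (1 + u ^ 2)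
        ≤ (1 + |u|) ^ (q : ℕ) * |ψ u| * (1 + u ^ 2) := by
          gcongr
          exact hqpow u
      _ = 1 * ((1 + |u|) ^ q * ((1 + u ^ 2) * |ψ u|)) := by ring
      _ ≤ (1 + |u|) ^ q * ((1 + |u|) ^ q * ((1 + u ^ 2) * |ψ u|)) := by
          apply mul_le_mul_of_nonneg_right (hA1 u)
          positivity
      _ ≤ D := hcore u
  have hψD : ∀ u : ℝ, |ψ u| ≤ D := by
    intro u
    have h1 : (1:ℝ) ≤ (1 + |u|) ^ s := by
      have h1' : (1 + |u|) ^ (0:ℝ) ≤ (1 + |u|) ^ s :=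
        Real.rpow_le_rpow_of_exponent_le (hone u) hs.le
      rwa [Real.rpow_zero] at h1'
    have h2 : (1 + u ^ 2)⁻¹ ≤ (1:ℝ) := by
      rw [inv_le_one_iff₀]; right; nlinarith [sq_nonneg u]
    calc |ψ u| ≤ (1 + |u|) ^ s * |ψ u| := le_mul_of_one_le_left (abs_nonneg _) h1
      _ ≤ D * (1 + u ^ 2)⁻¹ := hb1 u
      _ ≤ D * 1 := by
          apply mul_le_mul_of_nonneg_left h2 hD.le
      _ = D := mul_one D
  -- submultiplicativity of 1 + | |
  have hsub : ∀ x t : ℝ, 1 + |t| ≤ (1 + |x|) * (1 + |x - t|) := by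
    intro x t
    have h : |t| ≤ |x| + |x - t| := by
      calc |t| = |x - (x - t)| := by ring_nf
        _ ≤ |x| + |x - t| := abs_sub _ _
    nlinarith [abs_nonneg x, abs_nonneg (x - t)]
  -- global pointwise domination
  have hpt : ∀ x t : ℝ, |R t| * |ψ (x - t)| ≤ (C * (1 + |x|) ^ s * D) * (1 + (x - t) ^ 2)⁻¹ := by
    intro x t
    have hx0 : (0:ℝ) ≤ 1 + |x| := by positivity
    calc |R t| * |ψ (x - t)| ≤ (C * (1 + |t|) ^ s) * |ψ (x - t)| :=
          mul_le_mul_of_nonneg_right (hRb t) (abs_nonneg _)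
      _ ≤ (C * ((1 + |x|) ^ s * (1 + |x - t|) ^ s)) * |ψ (x - t)| := by
          have h1 : (1 + |t|) ^ s ≤ ((1 + |x|) * (1 + |x - t|)) ^ s :=
            Real.rpow_le_rpow (by positivity) (hsub x t) hs.le
          rw [Real.mul_rpow (by positivity) (by positivity)] at h1
          exact mul_le_mul_of_nonneg_right
            (mul_le_mul_of_nonneg_left h1 hC.le) (abs_nonneg _)
      _ = (C * (1 + |x|) ^ s) * ((1 + |x - t|) ^ s * |ψ (x - t)|) := by ring
      _ ≤ (C * (1 + |x|) ^ s) * (D * (1 + (x - t) ^ 2)⁻¹) := by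
          apply mul_le_mul_of_nonneg_left (hb1 (x - t))
          positivity
      _ = (C * (1 + |x|) ^ s * D) * (1 + (x - t) ^ 2)⁻¹ := by ring
  -- integrability of the convolution integrand
  have hint : ∀ x : ℝ, Integrable (fun t => R t * ψ (x - t)) volume := by
    intro x
    have hmeas : AEStronglyMeasurable (fun t => R t * ψ (x - t)) volume :=
      hR.aestronglyMeasurable.mul
        ((ψ.continuous.comp (continuous_const.sub continuous_id)).aestronglyMeasurable)
    refine Integrable.mono'
      ((integrable_inv_one_add_sq.comp_sub_left x).const_mul (C * (1 + |x|) ^ s * D)) hmeas ?_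
    filter_upwards with t
    rw [Real.norm_eq_abs, abs_mul]
    exact hpt x t
  have habs : ∀ x : ℝ, Integrable (fun t => |R t| * |ψ (x - t)|) volume := by
    intro x
    have h := (hint x).abs
    simpa only [abs_mul] using h
  set M : ℝ := ∫ u : ℝ, (1 + u ^ 2)⁻¹ with hMdef
  have hM0 : 0 ≤ M := integral_nonneg fun u => by positivity
  set L : ℝ := ∫ u : ℝ, |ψ u| with hLdef
  have hL0 : 0 ≤ L := integral_nonneg fun u => abs_nonneg _
  set K₀ : ℝ := C * 3 ^ s * 4 ^ q * D * M with hK₀def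
  have hK₀0 : 0 ≤ K₀ := by positivity
  -- extract pointwise lower bound from the asymptotic hypothesis
  rw [isBigO_iff] at hasymp
  obtain ⟨K, hK⟩ := hasymp
  rw [eventually_atTop] at hK
  obtain ⟨x₁, hx₁⟩ := hK
  set Kb : ℝ := max K 0 with hKbdef
  have hKb0 : 0 ≤ Kb := le_max_right K 0
  have hn2 : (1:ℝ) ≤ (n:ℝ) - 2 := by
    have h3 : (3:ℝ) ≤ (n:ℝ) := by exact_mod_cast hn
    linarith
  have hn20 : (0:ℝ) ≤ (n:ℝ) - 2 := by linarith
  have hlow : ∀ x : ℝ, 1 ≤ x → x₁ ≤ x → 2 * Kb / |a| ≤ x →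
      (|a| / 2) * x ^ ((n:ℝ) - 2) ≤ |∫ t : ℝ, R t * ψ (x - t)| := by
    intro x h1 h2 h3
    have hx0 : (0:ℝ) < x := by linarith
    have hp3 : (0:ℝ) ≤ x ^ ((n:ℝ) - 3) := Real.rpow_nonneg hx0.le _
    have hsplit : x ^ ((n:ℝ) - 2) = x * x ^ ((n:ℝ) - 3) := by
      rw [show (n:ℝ) - 2 = 1 + ((n:ℝ) - 3) by ring, Real.rpow_add hx0, Real.rpow_one]
    have h4 : |(∫ t : ℝ, R t * ψ (x - t)) - a * x ^ ((n:ℝ) - 2)| ≤ Kb * x ^ ((n:ℝ) - 3) := by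
      have h5 := hx₁ x h2
      simp only [Real.norm_eq_abs] at h5
      calc |(∫ t : ℝ, R t * ψ (x - t)) - a * x ^ ((n:ℝ) - 2)|
          ≤ K * |x ^ ((n:ℝ) - 3)| := h5
        _ ≤ Kb * |x ^ ((n:ℝ) - 3)| :=
            mul_le_mul_of_nonneg_right (le_max_left K 0) (abs_nonneg _)
        _ = Kb * x ^ ((n:ℝ) - 3) := by rw [abs_of_nonneg hp3]
    have h6 : Kb * x ^ ((n:ℝ) - 3) ≤ (|a| / 2) * x ^ ((n:ℝ) - 2) := by
      have h7 : 2 * Kb ≤ x * |a| := by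
        rw [div_le_iff₀ ha0] at h3
        linarith
      rw [hsplit]
      calc Kb * x ^ ((n:ℝ) - 3) ≤ ((|a| / 2) * x) * x ^ ((n:ℝ) - 3) := by
            apply mul_le_mul_of_nonneg_right _ hp3
            nlinarith
        _ = (|a| / 2) * (x * x ^ ((n:ℝ) - 3)) := by ring
    have htri : |a| * x ^ ((n:ℝ) - 2) ≤
        |∫ t : ℝ, R t * ψ (x - t)| + Kb * x ^ ((n:ℝ) - 3) := by
      have hp2 : (0:ℝ) ≤ x ^ ((n:ℝ) - 2) := Real.rpow_nonneg hx0.le _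
      calc |a| * x ^ ((n:ℝ) - 2) = |a * x ^ ((n:ℝ) - 2)| := by
            rw [abs_mul, abs_of_nonneg hp2]
        _ = |(∫ t : ℝ, R t * ψ (x - t)) -
              ((∫ t : ℝ, R t * ψ (x - t)) - a * x ^ ((n:ℝ) - 2))| := by
            congr 1
            ring
        _ ≤ |∫ t : ℝ, R t * ψ (x - t)| +
              |(∫ t : ℝ, R t * ψ (x - t)) - a * x ^ ((n:ℝ) - 2)| := abs_sub _ _
        _ ≤ |∫ t : ℝ, R t * ψ (x - t)| + Kb * x ^ ((n:ℝ) - 3) := by linarith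
    linarith
  -- choose the constants
  refine ⟨|a| / (8 * (L + 1)), max (max x₁ 1) (max (2 * Kb / |a|) (4 * K₀ / |a| + 1)),
    by positivity, ?_, ?_⟩
  · calc (0:ℝ) < 1 := one_pos
      _ ≤ max x₁ 1 := le_max_right _ _
      _ ≤ _ := le_max_left _ _
  intro X hX
  have hX1 : (1:ℝ) ≤ X := le_of_lt (lt_of_le_of_lt ((le_max_right x₁ 1).trans (le_max_left _ _)) hX)
  have hXx₁ : x₁ ≤ X := le_of_lt (lt_of_le_of_lt ((le_max_left x₁ 1).trans (le_max_left _ _)) hX)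
  have hXKb : 2 * Kb / |a| ≤ X :=
    le_of_lt (lt_of_le_of_lt ((le_max_left _ _).trans (le_max_right _ _)) hX)
  have hXK₀ : 4 * K₀ / |a| + 1 ≤ X :=
    le_of_lt (lt_of_le_of_lt ((le_max_right _ _).trans (le_max_right _ _)) hX)
  have hX0 : (0:ℝ) < X := by linarith
  set S : Set ℝ := Set.Icc X (2 * X) with hSdef
  set I : Set ℝ := Set.Icc (5 * X / 4) (7 * X / 4) with hIdef
  have hXpow : X ≤ X ^ ((n:ℝ) - 2) := by
    nth_rewrite 1 [← Real.rpow_one X]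
    exact Real.rpow_le_rpow_of_exponent_le hX1 hn2
  have hK₀X : K₀ ≤ (|a| / 4) * X ^ ((n:ℝ) - 2) := by
    have h1 : 4 * K₀ / |a| ≤ X - 1 := by linarith
    have h2 : 4 * K₀ ≤ (X - 1) * |a| := by rwa [div_le_iff₀ ha0] at h1
    nlinarith [mul_nonneg ha0.le (sub_nonneg.mpr hXpow)]
  -- tail estimate
  have htail : ∀ x ∈ I, (∫ t in Sᶜ, |R t| * |ψ (x - t)|) ≤ K₀ := by
    intro x hx
    obtain ⟨hx5, hx7⟩ := hx
    have hxpos : (0:ℝ) < x := by linarith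
    set W : ℝ := C * (3 * X) ^ s * (D * ((1 + X / 4) ^ q)⁻¹) with hWdef
    have hW0 : 0 ≤ W := by positivity
    have hdist : ∀ t : ℝ, t ∉ S → X / 4 ≤ |x - t| := by
      intro t ht
      simp only [hSdef, Set.mem_Icc, not_and_or, not_le] at ht
      rcases ht with h | h
      · calc X / 4 ≤ x - t := by linarith
          _ ≤ |x - t| := le_abs_self _
      · calc X / 4 ≤ -(x - t) := by linarith
          _ ≤ |x - t| := neg_le_abs _
    -- tail pointwise bound
    have hptT : ∀ t : ℝ, t ∉ S → |R t| * |ψ (x - t)| ≤ W * (1 + (x - t) ^ 2)⁻¹ := by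
      intro t ht
      have hu := hdist t ht
      set u : ℝ := x - t with hudef
      have hb2 : (1 + |u|) ^ s * |ψ u| ≤ (D * ((1 + X / 4) ^ q)⁻¹) * (1 + u ^ 2)⁻¹ := by
        have hBig : (1 + X / 4) ^ q ≤ (1 + |u|) ^ q :=
          pow_le_pow_left₀ (by positivity) (by linarith) q
        have hposc : (0:ℝ) < (1 + X / 4) ^ q := by positivity
        have hposb : (0:ℝ) < 1 + u ^ 2 := by positivity
        have h2 : (1 + |u|) ^ s * |ψ u| * ((1 + X / 4) ^ q * (1 + u ^ 2)) ≤ D := by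
          calc (1 + |u|) ^ s * |ψ u| * ((1 + X / 4) ^ q * (1 + u ^ 2))
              ≤ (1 + |u|) ^ (q:ℕ) * |ψ u| * ((1 + |u|) ^ q * (1 + u ^ 2)) := by
                apply mul_le_mul
                · exact mul_le_mul_of_nonneg_right (hqpow u) (abs_nonneg _)
                · exact mul_le_mul_of_nonneg_right hBig (by positivity)
                · positivity
                · positivity
              _ = (1 + |u|) ^ q * ((1 + |u|) ^ q * ((1 + u ^ 2) * |ψ u|)) := by ring
              _ ≤ D := hcore u
        have h3 : (1 + |u|) ^ s * |ψ u| ≤ D / ((1 + X / 4) ^ q * (1 + u ^ 2)) :=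
          (le_div_iff₀ (by positivity)).mpr h2
        rwa [div_eq_mul_inv, mul_inv, ← mul_assoc] at h3
      have hxX : 1 + |x| ≤ 3 * X := by
        rw [abs_of_pos hxpos]
        linarith
      calc |R t| * |ψ u| ≤ (C * (1 + |t|) ^ s) * |ψ u| :=
            mul_le_mul_of_nonneg_right (hRb t) (abs_nonneg _)
        _ ≤ (C * ((1 + |x|) ^ s * (1 + |u|) ^ s)) * |ψ u| := by
            have h1 : (1 + |t|) ^ s ≤ ((1 + |x|) * (1 + |u|)) ^ s :=
              Real.rpow_le_rpow (by positivity) (hsub x t) hs.le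
            rw [Real.mul_rpow (by positivity) (by positivity)] at h1
            exact mul_le_mul_of_nonneg_right
              (mul_le_mul_of_nonneg_left h1 hC.le) (abs_nonneg _)
        _ ≤ (C * ((3 * X) ^ s * (1 + |u|) ^ s)) * |ψ u| := by
            have h1 : (1 + |x|) ^ s ≤ (3 * X) ^ s :=
              Real.rpow_le_rpow (by positivity) hxX hs.le
            have h2 : (0:ℝ) ≤ (1 + |u|) ^ s := Real.rpow_nonneg (by positivity) s
            exact mul_le_mul_of_nonneg_right
              (mul_le_mul_of_nonneg_left
                (mul_le_mul_of_nonneg_right h1 h2) hC.le) (abs_nonneg _)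
        _ = (C * (3 * X) ^ s) * ((1 + |u|) ^ s * |ψ u|) := by ring
        _ ≤ (C * (3 * X) ^ s) * ((D * ((1 + X / 4) ^ q)⁻¹) * (1 + u ^ 2)⁻¹) := by
            apply mul_le_mul_of_nonneg_left hb2
            positivity
        _ = W * (1 + u ^ 2)⁻¹ := by rw [hWdef]; ring
    -- integrate the tail bound
    have hint1 : Integrable (fun t : ℝ => W * (1 + (x - t) ^ 2)⁻¹) volume :=
      (integrable_inv_one_add_sq.comp_sub_left x).const_mul W
    have step1 : (∫ t in Sᶜ, |R t| * |ψ (x - t)|) ≤ ∫ t in Sᶜ, W * (1 + (x - t) ^ 2)⁻¹ := by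
      apply setIntegral_mono_on ((habs x).integrableOn) (hint1.integrableOn)
        measurableSet_Icc.compl
      intro t ht
      exact hptT t ht
    have step2 : (∫ t in Sᶜ, W * (1 + (x - t) ^ 2)⁻¹) ≤ ∫ t : ℝ, W * (1 + (x - t) ^ 2)⁻¹ := by
      apply setIntegral_le_integral hint1
      filter_upwards with t
      positivity
    have step3 : (∫ t : ℝ, W * (1 + (x - t) ^ 2)⁻¹) = W * M := by
      rw [integral_const_mul, hMdef]
      congr 1
      exact integral_sub_left_eq_self (fun u => (1 + u ^ 2)⁻¹) volume x
    have hWle : W ≤ C * 3 ^ s * 4 ^ q * D := by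
      have hXq : (0:ℝ) < X ^ (q:ℕ) := by positivity
      have e1 : ((1 + X / 4) ^ q)⁻¹ ≤ ((X / 4) ^ q : ℝ)⁻¹ := by
        apply inv_anti₀ (by positivity)
        apply pow_le_pow_left₀ (by positivity) (by linarith)
      have e2 : ((X / 4) ^ q : ℝ)⁻¹ = 4 ^ q / X ^ q := by
        rw [div_pow, inv_div]
      have e3 : X ^ s ≤ X ^ (q:ℕ) := by
        rw [← Real.rpow_natCast X q]
        exact Real.rpow_le_rpow_of_exponent_le hX1 hsq
      have e4 : (3 * X) ^ s = 3 ^ s * X ^ s := Real.mul_rpow (by norm_num) hX0.le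
      calc W ≤ C * (3 * X) ^ s * (D * (4 ^ q / X ^ q)) := by
            rw [hWdef]
            apply mul_le_mul_of_nonneg_left _ (by positivity)
            apply mul_le_mul_of_nonneg_left _ hD.le
            rw [← e2]
            exact e1
        _ = (C * 3 ^ s * 4 ^ q * D) * (X ^ s / X ^ (q:ℕ)) := by rw [e4]; ring
        _ ≤ (C * 3 ^ s * 4 ^ q * D) * 1 := by
            apply mul_le_mul_of_nonneg_left _ (by positivity)
            rw [div_le_one hXq]
            exact e3
        _ = C * 3 ^ s * 4 ^ q * D := mul_one _
    calc (∫ t in Sᶜ, |R t| * |ψ (x - t)|) ≤ W * M := by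
          rw [← step3]; exact step1.trans step2
      _ ≤ (C * 3 ^ s * 4 ^ q * D) * M := mul_le_mul_of_nonneg_right hWle hM0
      _ = K₀ := by rw [hK₀def]
  -- main pointwise lower bound on I
  have hmain : ∀ x ∈ I, (|a| / 4) * X ^ ((n:ℝ) - 2) ≤ ∫ t in S, |R t| * |ψ (x - t)| := by
    intro x hx
    obtain ⟨hx5, hx7⟩ := hx
    have hxX : X ≤ x := by linarith
    have hx1 : (1:ℝ) ≤ x := by linarith
    have hlow' := hlow x hx1 (le_trans hXx₁ hxX) (le_trans hXKb hxX)
    have hXxpow : X ^ ((n:ℝ) - 2) ≤ x ^ ((n:ℝ) - 2) :=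
      Real.rpow_le_rpow hX0.le hxX hn20
    have hsplitint : (∫ t in S, |R t| * |ψ (x - t)|) + (∫ t in Sᶜ, |R t| * |ψ (x - t)|)
        = ∫ t : ℝ, |R t| * |ψ (x - t)| :=
      integral_add_compl measurableSet_Icc (habs x)
    have hup : |∫ t : ℝ, R t * ψ (x - t)| ≤ ∫ t : ℝ, |R t| * |ψ (x - t)| := by
      have h := norm_integral_le_integral_norm (μ := volume) (fun t => R t * ψ (x - t))
      simpa [Real.norm_eq_abs, abs_mul] using h
    have htail' := htail x ⟨hx5, hx7⟩
    have hchain : (|a| / 2) * X ^ ((n:ℝ) - 2) ≤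
        (∫ t in S, |R t| * |ψ (x - t)|) + K₀ := by
      calc (|a| / 2) * X ^ ((n:ℝ) - 2) ≤ (|a| / 2) * x ^ ((n:ℝ) - 2) := by
            apply mul_le_mul_of_nonneg_left hXxpow (by positivity)
        _ ≤ |∫ t : ℝ, R t * ψ (x - t)| := hlow'
        _ ≤ ∫ t : ℝ, |R t| * |ψ (x - t)| := hup
        _ = (∫ t in S, |R t| * |ψ (x - t)|) + (∫ t in Sᶜ, |R t| * |ψ (x - t)|) :=
            hsplitint.symm
        _ ≤ (∫ t in S, |R t| * |ψ (x - t)|) + K₀ := by linarith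
    linarith
  -- Fubini step
  haveI : IsFiniteMeasure (volume.restrict I) := by
    constructor
    rw [Measure.restrict_apply_univ]
    exact measure_Icc_lt_top
  have hRS : Integrable R (volume.restrict S) := hR.integrableOn_isCompact isCompact_Icc
  have hFprod : Integrable (fun p : ℝ × ℝ => |R p.2| * |ψ (p.1 - p.2)|)
      ((volume.restrict I).prod (volume.restrict S)) := by
    have hmeas : AEStronglyMeasurable (fun p : ℝ × ℝ => |R p.2| * |ψ (p.1 - p.2)|)
        ((volume.restrict I).prod (volume.restrict S)) := by
      apply AEStronglyMeasurable.mul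
      · exact continuous_abs.comp_aestronglyMeasurable (hR.aestronglyMeasurable.restrict.comp_snd)
      · exact (ψ.continuous.comp (continuous_fst.sub continuous_snd)).abs.aestronglyMeasurable
    have hbound : Integrable (fun p : ℝ × ℝ => (1 : ℝ) * (D * |R p.2|))
        ((volume.restrict I).prod (volume.restrict S)) :=
      (integrable_const (1:ℝ)).mul_prod (hRS.abs.const_mul D)
    refine Integrable.mono' hbound hmeas ?_
    filter_upwards with p
    rw [Real.norm_eq_abs, abs_mul, abs_abs, abs_abs, one_mul]
    calc |R p.2| * |ψ (p.1 - p.2)| ≤ |R p.2| * D :=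
          mul_le_mul_of_nonneg_left (hψD _) (abs_nonneg _)
      _ = D * |R p.2| := mul_comm _ _
  have hg_int : Integrable (fun x => ∫ t in S, |R t| * |ψ (x - t)|) (volume.restrict I) :=
    hFprod.integral_prod_left
  have hswap : (∫ x in I, ∫ t in S, |R t| * |ψ (x - t)|)
      = ∫ t in S, ∫ x in I, |R t| * |ψ (x - t)| :=
    integral_integral_swap hFprod
  have hinner : ∀ t : ℝ, (∫ x in I, |R t| * |ψ (x - t)|) ≤ L * |R t| := by
    intro t
    rw [integral_const_mul]
    have h1 : (∫ x in I, |ψ (x - t)|) ≤ ∫ x : ℝ, |ψ (x - t)| := by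
      apply setIntegral_le_integral (ψ.integrable.abs.comp_sub_right t)
      filter_upwards with x
      exact abs_nonneg _
    have h2 : (∫ x : ℝ, |ψ (x - t)|) = L := by
      rw [hLdef]
      exact integral_sub_right_eq_self (fun u => |ψ u|) t
    calc |R t| * ∫ x in I, |ψ (x - t)| ≤ |R t| * L := by
          apply mul_le_mul_of_nonneg_left _ (abs_nonneg _)
          rw [← h2]
          exact h1
      _ = L * |R t| := mul_comm _ _
  have houter : (∫ t in S, ∫ x in I, |R t| * |ψ (x - t)|) ≤ L * ∫ t in S, |R t| := by
    rw [← integral_const_mul]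
    apply integral_mono hFprod.integral_prod_right (hRS.abs.const_mul L)
    intro t
    exact hinner t
  have hvolI : (volume I).toReal = X / 2 := by
    rw [hIdef, Real.volume_Icc, ENNReal.toReal_ofReal (by linarith)]
    ring
  have hlower : (X / 2) * ((|a| / 4) * X ^ ((n:ℝ) - 2)) ≤
      ∫ x in I, ∫ t in S, |R t| * |ψ (x - t)| := by
    have h1 : (∫ _x in I, (|a| / 4) * X ^ ((n:ℝ) - 2)) ≤
        ∫ x in I, ∫ t in S, |R t| * |ψ (x - t)| := by
      apply setIntegral_mono_on (integrableOn_const measure_Icc_lt_top.ne) hg_int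
        measurableSet_Icc
      intro x hx
      exact hmain x hx
    rwa [setIntegral_const, smul_eq_mul, measureReal_def, hvolI] at h1
  have hfinal : (X / 2) * ((|a| / 4) * X ^ ((n:ℝ) - 2)) ≤ L * ∫ t in S, |R t| := by
    calc (X / 2) * ((|a| / 4) * X ^ ((n:ℝ) - 2))
        ≤ ∫ x in I, ∫ t in S, |R t| * |ψ (x - t)| := hlower
      _ = ∫ t in S, ∫ x in I, |R t| * |ψ (x - t)| := hswap
      _ ≤ L * ∫ t in S, |R t| := houter
  -- conclude
  have hRS0 : 0 ≤ ∫ t in S, |R t| := integral_nonneg fun t => abs_nonneg _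
  have hIcc : (∫ t in X..(2 * X), |R t|) = ∫ t in S, |R t| := by
    rw [intervalIntegral.integral_of_le (by linarith), hSdef,
      ← integral_Icc_eq_integral_Ioc]
  rw [hIcc]
  rw [div_mul_eq_mul_div, div_le_iff₀ (by positivity), one_div, inv_mul_eq_div,
    div_mul_eq_mul_div, le_div_iff₀ hX0]
  set P : ℝ := X ^ ((n:ℝ) - 2) with hPdef
  have hP0 : 0 ≤ P := Real.rpow_nonneg hX0.le _
  nlinarith [hfinal, hRS0, hL0, hP0, hX0]
end
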